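/- arXiv:1410.2513 — 7 statements merged into one kernel-verified Lean document; each statement's English description precedes it below -/
import Mathlib

section
/- A cyclic surface in Sol₃ foliated by geodesics of the planes x = const of the form X(s,t) = (s, a(s), t), where a : I → ℝ is twice continuously differentiable on a nonempty open interval I and t ranges over ℝ, has zero mean curvature if and only if a is affine, i.e. there exist λ, μ ∈ ℝ with a(s) = λ·s + μ for all s ∈ I (so the surface is a vertical plane). Equivalently, the mean curvature vanishes identically if and only if a''(s) = 0 on I. -/
open Real

noncomputable section

/-- Tangent/ambient vectors of Sol₃ modeled on ℝ³. -/
abbrev V3 : Type := ℝ × ℝ × ℝ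

/-- The Sol₃ metric at a point `p = (x,y,z)`:
`g_p(u,v) = e^{2z}u₁v₁ + e^{-2z}u₂v₂ + u₃v₃`. -/
def gSol (p u v : V3) : ℝ :=
  exp (2 * p.2.2) * u.1 * v.1 + exp (-(2 * p.2.2)) * u.2.1 * v.2.1 + u.2.2 * v.2.2

/-- The Christoffel bilinear map of the Sol₃ metric at a point `p`. -/
def GammaSol (p u v : V3) : V3 :=
  (u.1 * v.2.2 + u.2.2 * v.1,
   -(u.2.1 * v.2.2 + u.2.2 * v.2.1),
   -exp (2 * p.2.2) * u.1 * v.1 + exp (-(2 * p.2.2)) * u.2.1 * v.2.1)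

/-- Partial derivative of a parametrized surface with respect to the first parameter. -/
def pXs (X : ℝ → ℝ → V3) (s t : ℝ) : V3 := deriv (fun s' => X s' t) s

/-- Partial derivative of a parametrized surface with respect to the second parameter. -/
def pXt (X : ℝ → ℝ → V3) (s t : ℝ) : V3 := deriv (fun t' => X s t') t

/-- Ambient second-order quantity `S_ss = X_ss + Γ_X(X_s, X_s)`. -/
def Sss (X : ℝ → ℝ → V3) (s t : ℝ) : V3 :=
  deriv (fun s' => pXs X s' t) s + GammaSol (X s t) (pXs X s t) (pXs X s t)

/-- Ambient second-order quantity `S_st = X_st + Γ_X(X_s, X_t)`. -/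
def Sst (X : ℝ → ℝ → V3) (s t : ℝ) : V3 :=
  deriv (fun t' => pXs X s t') t + GammaSol (X s t) (pXs X s t) (pXt X s t)

/-- Ambient second-order quantity `S_tt = X_tt + Γ_X(X_t, X_t)`. -/
def Stt (X : ℝ → ℝ → V3) (s t : ℝ) : V3 :=
  deriv (fun t' => pXt X s t') t + GammaSol (X s t) (pXt X s t) (pXt X s t)

/-- `X : I × J → Sol₃` has zero mean curvature:
for every point of `I × J` and every normal vector `n`,
`E·g(S_tt,n) - 2F·g(S_st,n) + G·g(S_ss,n) = 0`. -/
def MeanZero (I J : Set ℝ) (X : ℝ → ℝ → V3) : Prop :=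
  ∀ s ∈ I, ∀ t ∈ J, ∀ n : V3,
    gSol (X s t) n (pXs X s t) = 0 → gSol (X s t) n (pXt X s t) = 0 →
    gSol (X s t) (pXs X s t) (pXs X s t) * gSol (X s t) (Stt X s t) n
      - 2 * gSol (X s t) (pXs X s t) (pXt X s t) * gSol (X s t) (Sst X s t) n
      + gSol (X s t) (pXt X s t) (pXt X s t) * gSol (X s t) (Sss X s t) n = 0

/-- `X : I × J → Sol₃` has zero Gaussian curvature:
for every point of `I × J` and every normal vector `n`,
`g(S_ss,n)·g(S_tt,n) - g(S_st,n)² = 0`. -/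
def GaussZero (I J : Set ℝ) (X : ℝ → ℝ → V3) : Prop :=
  ∀ s ∈ I, ∀ t ∈ J, ∀ n : V3,
    gSol (X s t) n (pXs X s t) = 0 → gSol (X s t) n (pXt X s t) = 0 →
    gSol (X s t) (Sss X s t) n * gSol (X s t) (Stt X s t) n
      - (gSol (X s t) (Sst X s t) n) ^ 2 = 0
/-- Auxiliary: `a'' = 0` on an open ord-connected set iff `a` is affine there. -/
lemma secondDerivZero_iff_affine
    (I : Set ℝ) (hIo : IsOpen I) (hIne : I.Nonempty) (hIc : I.OrdConnected)
    (a : ℝ → ℝ) (ha : ContDiffOn ℝ 2 a I) :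
    (∀ s ∈ I, deriv (deriv a) s = 0) ↔ ∃ lam mu : ℝ, ∀ s ∈ I, a s = lam * s + mu := by
  have hconv : Convex ℝ I := hIc.convex
  have hda : ∀ s ∈ I, DifferentiableAt ℝ a s := fun s hs =>
    ((ha.differentiableOn (by norm_num)) s hs).differentiableAt (hIo.mem_nhds hs)
  have hda' : ∀ s ∈ I, DifferentiableAt ℝ (deriv a) s := fun s hs =>
    (((ha.deriv_of_isOpen (m := 1) hIo (by norm_num)).differentiableOn (by norm_num)) s hs).differentiableAt
      (hIo.mem_nhds hs)
  constructor
  · intro h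
    obtain ⟨s₀, hs₀⟩ := hIne
    set lam := deriv a s₀ with hlam
    have hd1 : ∀ s ∈ I, deriv a s = lam := by
      intro s hs
      refine hconv.is_const_of_fderivWithin_eq_zero
        (fun x hx => (hda' x hx).differentiableWithinAt) ?_ hs hs₀
      intro x hx
      rw [fderivWithin_of_isOpen hIo hx, (hda' x hx).hasDerivAt.hasFDerivAt.fderiv]
      ext
      simp [h x hx]
    refine ⟨lam, a s₀ - lam * s₀, fun s hs => ?_⟩
    have hkey : a s - lam * s = a s₀ - lam * s₀ := by
      refine hconv.is_const_of_fderivWithin_eq_zero (f := fun x => a x - lam * x)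
        (fun x hx => ((hda x hx).sub ((differentiable_const lam).mul differentiable_id).differentiableAt).differentiableWithinAt)
        ?_ hs hs₀
      intro x hx
      rw [fderivWithin_of_isOpen hIo hx]
      have hd : HasDerivAt (fun x => a x - lam * x) (deriv a x - lam) x :=
        (hda x hx).hasDerivAt.sub (((hasDerivAt_id' x).const_mul lam).congr_deriv (by ring))
      rw [hd.hasFDerivAt.fderiv]
      ext
      simp [hd1 x hx]
    linarith
  · rintro ⟨lam, mu, h⟩ s hs
    have hd1 : ∀ x ∈ I, deriv a x = lam := by
      intro x hx
      have hev : a =ᶠ[nhds x] fun y => lam * y + mu := by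
        filter_upwards [hIo.mem_nhds hx] with y hy using h y hy
      rw [hev.deriv_eq]
      have : HasDerivAt (fun y => lam * y + mu) lam x :=
        (((hasDerivAt_id' x).const_mul lam).add_const mu).congr_deriv (by ring)
      exact this.deriv
    have hev2 : deriv a =ᶠ[nhds s] fun _ => lam := by
      filter_upwards [hIo.mem_nhds hs] with y hy using hd1 y hy
    rw [hev2.deriv_eq, deriv_const]

/-- A cyclic surface `X(s,t) = (s, a(s), t)` foliated by geodesics
has zero mean curvature iff `a` is affine, equivalently iff `a'' = 0` on `I`. -/
theorem minimal_foliated_by_geodesics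
    (I : Set ℝ) (hIo : IsOpen I) (hIne : I.Nonempty) (hIc : I.OrdConnected)
    (a : ℝ → ℝ) (ha : ContDiffOn ℝ 2 a I) :
    (MeanZero I Set.univ (fun s t => (s, a s, t)) ↔
      ∃ lam mu : ℝ, ∀ s ∈ I, a s = lam * s + mu) ∧
    (MeanZero I Set.univ (fun s t => (s, a s, t)) ↔
      ∀ s ∈ I, deriv (deriv a) s = 0) := by
  set X : ℝ → ℝ → ℝ × ℝ × ℝ := fun s t => (s, a s, t) with hX
  have hda : ∀ s ∈ I, DifferentiableAt ℝ a s := fun s hs =>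
    ((ha.differentiableOn (by norm_num)) s hs).differentiableAt (hIo.mem_nhds hs)
  have hda' : ∀ s ∈ I, DifferentiableAt ℝ (deriv a) s := fun s hs =>
    (((ha.deriv_of_isOpen (m := 1) hIo (by norm_num)).differentiableOn (by norm_num)) s hs).differentiableAt
      (hIo.mem_nhds hs)
  have hXs : ∀ t : ℝ, ∀ s ∈ I, pXs X s t = (1, deriv a s, 0) := by
    intro t s hs
    have h : HasDerivAt (fun s' => X s' t) ((1 : ℝ), deriv a s, (0 : ℝ)) s :=
      HasDerivAt.prodMk (hasDerivAt_id' s) (HasDerivAt.prodMk ((hda s hs).hasDerivAt) (hasDerivAt_const s t))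
    exact h.deriv
  have hXt : ∀ s t : ℝ, pXt X s t = (0, 0, 1) := by
    intro s t
    have h : HasDerivAt (fun t' => X s t') ((0 : ℝ), (0 : ℝ), (1 : ℝ)) t :=
      HasDerivAt.prodMk (hasDerivAt_const t s) (HasDerivAt.prodMk (hasDerivAt_const t (a s)) (hasDerivAt_id' t))
    exact h.deriv
  have hStt : ∀ s t : ℝ, Stt X s t = 0 := by
    intro s t
    have h1 : (fun t' => pXt X s t') = fun _ => ((0 : ℝ), (0 : ℝ), (1 : ℝ)) := by
      funext t'; exact hXt s t'
    rw [Stt, h1, deriv_const, hXt]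
    simp [GammaSol, Prod.ext_iff]
  have hSss : ∀ t : ℝ, ∀ s ∈ I, Sss X s t =
      (0, deriv (deriv a) s, -exp (2 * t) + exp (-(2 * t)) * (deriv a s * deriv a s)) := by
    intro t s hs
    have hev : (fun s' => pXs X s' t) =ᶠ[nhds s] fun s' => ((1 : ℝ), deriv a s', (0 : ℝ)) := by
      filter_upwards [hIo.mem_nhds hs] with s' hs' using hXs t s' hs'
    have h : HasDerivAt (fun s' => ((1 : ℝ), deriv a s', (0 : ℝ)))
        ((0 : ℝ), deriv (deriv a) s, (0 : ℝ)) s :=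
      HasDerivAt.prodMk (hasDerivAt_const s (1 : ℝ)) (HasDerivAt.prodMk ((hda' s hs).hasDerivAt) (hasDerivAt_const s (0 : ℝ)))
    rw [Sss, hev.deriv_eq, h.deriv, hXs t s hs]
    simp only [GammaSol, hX, Prod.mk_add_mk, Prod.mk.injEq]
    refine ⟨by ring, by ring, by ring⟩
  have key : MeanZero I Set.univ X ↔ ∀ s ∈ I, deriv (deriv a) s = 0 := by
    constructor
    · intro h s hs
      have key := h s hs 0 trivial (-deriv a s, 1, 0) ?_ ?_
      · rw [hXs 0 s hs, hXt, hStt, hSss 0 s hs] at key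
        simp only [gSol, hX] at key
        norm_num at key
        nlinarith [sq_nonneg (deriv a s), exp_pos (0:ℝ)]
      · rw [hXs 0 s hs]; simp [gSol, hX]
      · rw [hXt]; simp [gSol, hX]
    · intro h s hs t _ n hn1 hn2
      rw [hXt] at hn2
      have hn3 : n.2.2 = 0 := by simpa [gSol, hX] using hn2
      rw [hXs t s hs, hXt, hStt, hSss t s hs, h s hs]
      simp only [gSol, hX, hn3, Prod.fst_zero, Prod.snd_zero]
      ring
  exact ⟨key.trans (secondDerivZero_iff_affine I hIo hIne hIc a ha), key⟩
end
end

section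
/- A surface in Sol₃ of the form X(s,t) = (s, t, log b(s)), where b : I → ℝ is twice continuously differentiable and positive on a nonempty open interval I and t ranges over ℝ, has zero mean curvature if and only if 1/b is affine, i.e. there exist α, β ∈ ℝ with b(s)·(α·s + β) = 1 for all s ∈ I. Equivalently, the mean curvature vanishes identically if and only if b(s)·b''(s) − 2·b'(s)² = 0 on I; the nonconstant solutions are b(s) = b₀/(s + b₁). -/
open Real

noncomputable section

section Aux

variable {I : Set ℝ} {b : ℝ → ℝ}

lemma hdb (hIo : IsOpen I) (hb : ContDiffOn ℝ 2 b I) {s : ℝ} (hs : s ∈ I) :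
    HasDerivAt b (deriv b s) s :=
  ((hb.differentiableOn (by norm_num)).differentiableAt (hIo.mem_nhds hs)).hasDerivAt

lemma pXs_eq (hIo : IsOpen I) (hb : ContDiffOn ℝ 2 b I) (hbpos : ∀ s ∈ I, 0 < b s)
    {s : ℝ} (hs : s ∈ I) (t : ℝ) :
    pXs (fun s t => (s, t, log (b s))) s t = (1, 0, deriv b s / b s) := by
  have h : HasDerivAt (fun s' : ℝ => ((s' : ℝ), (t : ℝ), log (b s')))
      (1, 0, deriv b s / b s) s :=
    (hasDerivAt_id s).prodMk ((hasDerivAt_const s t).prodMk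
      (((hdb hIo hb hs).log (hbpos s hs).ne')))
  exact h.deriv

lemma pXt_eq (b : ℝ → ℝ) (s t : ℝ) :
    pXt (fun s t => (s, t, log (b s))) s t = (0, 1, 0) := by
  have h : HasDerivAt (fun t' : ℝ => ((s : ℝ), (t' : ℝ), log (b s))) (0, 1, 0) t :=
    (hasDerivAt_const t s).prodMk ((hasDerivAt_id t).prodMk (hasDerivAt_const t (log (b s))))
  exact h.deriv

lemma hddb (hIo : IsOpen I) (hb : ContDiffOn ℝ 2 b I) {s : ℝ} (hs : s ∈ I) :
    HasDerivAt (deriv b) (deriv (deriv b) s) s := by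
  have h1 : ContDiffOn ℝ 1 (deriv b) I := hb.deriv_of_isOpen hIo le_rfl
  exact ((h1.differentiableOn one_ne_zero).differentiableAt (hIo.mem_nhds hs)).hasDerivAt

lemma dpXs_s_eq (hIo : IsOpen I) (hb : ContDiffOn ℝ 2 b I) (hbpos : ∀ s ∈ I, 0 < b s)
    {s : ℝ} (hs : s ∈ I) (t : ℝ) :
    deriv (fun s' => pXs (fun s t => (s, t, log (b s))) s' t) s
      = (0, 0, (deriv (deriv b) s * b s - deriv b s * deriv b s) / b s ^ 2) := by
  have hev : (fun s' => pXs (fun s t => (s, t, log (b s))) s' t)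
      =ᶠ[nhds s] (fun s' => ((1 : ℝ), (0 : ℝ), deriv b s' / b s')) := by
    filter_upwards [hIo.mem_nhds hs] with s' hs'
    exact pXs_eq hIo hb hbpos hs' t
  rw [hev.deriv_eq]
  have h : HasDerivAt (fun s' : ℝ => ((1 : ℝ), (0 : ℝ), deriv b s' / b s'))
      (0, 0, (deriv (deriv b) s * b s - deriv b s * deriv b s) / b s ^ 2) s :=
    (hasDerivAt_const s (1:ℝ)).prodMk ((hasDerivAt_const s (0:ℝ)).prodMk
      ((hddb hIo hb hs).div (hdb hIo hb hs) (hbpos s hs).ne'))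
  exact h.deriv

lemma dpXs_t_eq (hIo : IsOpen I) (hb : ContDiffOn ℝ 2 b I) (hbpos : ∀ s ∈ I, 0 < b s)
    {s : ℝ} (hs : s ∈ I) (t : ℝ) :
    deriv (fun t' => pXs (fun s t => (s, t, log (b s))) s t') t = 0 := by
  have : (fun t' => pXs (fun s t => (s, t, log (b s))) s t')
      = fun _ => ((1 : ℝ), (0 : ℝ), deriv b s / b s) := by
    funext t'; exact pXs_eq hIo hb hbpos hs t'
  rw [this, deriv_const]

lemma dpXt_t_eq (b : ℝ → ℝ) (s t : ℝ) :
    deriv (fun t' => pXt (fun s t => (s, t, log (b s))) s t') t = 0 := by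
  have : (fun t' => pXt (fun s t => (s, t, log (b s))) s t')
      = fun _ => ((0 : ℝ), (1 : ℝ), (0 : ℝ)) := by
    funext t'; exact pXt_eq b s t'
  rw [this, deriv_const]

lemma meanZero_iff_ode (hIo : IsOpen I) (hb : ContDiffOn ℝ 2 b I)
    (hbpos : ∀ s ∈ I, 0 < b s) :
    MeanZero I Set.univ (fun s t => (s, t, log (b s))) ↔
      ∀ s ∈ I, b s * deriv (deriv b) s - 2 * (deriv b s) ^ 2 = 0 := by
  have key : ∀ s ∈ I, ∀ t : ℝ, ∀ n : V3,
      gSol ((fun s t => (s, t, log (b s))) s t) n (pXs (fun s t => (s, t, log (b s))) s t)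
        = b s ^ 2 * n.1 + (deriv b s / b s) * n.2.2 ∧
      gSol ((fun s t => (s, t, log (b s))) s t) n (pXt (fun s t => (s, t, log (b s))) s t)
        = (b s ^ 2)⁻¹ * n.2.1 := by
    intro s hs t n
    have he2 : exp (2 * log (b s)) = b s ^ 2 := by
      rw [two_mul, exp_add, exp_log (hbpos s hs)]; ring
    have hem : exp (-(2 * log (b s))) = (b s ^ 2)⁻¹ := by rw [exp_neg, he2]
    constructor <;>
      simp [gSol, pXs_eq hIo hb hbpos hs, pXt_eq, he2, hem] <;> ring
  constructor
  · intro h s hs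
    have hb0 := (hbpos s hs).ne'
    have he2 : exp (2 * log (b s)) = b s ^ 2 := by
      rw [two_mul, exp_add, exp_log (hbpos s hs)]; ring
    have hem : exp (-(2 * log (b s))) = (b s ^ 2)⁻¹ := by rw [exp_neg, he2]
    set n : V3 := (-(deriv b s) / (b s) ^ 3, 0, 1) with hn
    have hm := h s hs 0 trivial n ?_ ?_
    rotate_left
    · rw [(key s hs 0 n).1]; field_simp; simp [hn]; field_simp; ring
    · rw [(key s hs 0 n).2]; simp [hn]
    · simp only [Sss, Sst, Stt, gSol, GammaSol,
        pXs_eq hIo hb hbpos hs, pXt_eq, dpXs_s_eq hIo hb hbpos hs,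
        dpXs_t_eq hIo hb hbpos hs, dpXt_t_eq, deriv_const', Prod.mk_add_mk, zero_add,
        he2, hem, hn] at hm
      field_simp at hm
      have h8 : b s ^ 8 * (b s * deriv (deriv b) s - 2 * (deriv b s) ^ 2) = b s ^ 8 * 0 := by
        rw [mul_zero]; linear_combination b s ^ 7 * hm
      exact mul_left_cancel₀ (pow_ne_zero 8 hb0) h8
  · intro h s hs t _ n hn1 hn2
    have hb0 := (hbpos s hs).ne'
    have he2 : exp (2 * log (b s)) = b s ^ 2 := by
      rw [two_mul, exp_add, exp_log (hbpos s hs)]; ring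
    have hem : exp (-(2 * log (b s))) = (b s ^ 2)⁻¹ := by rw [exp_neg, he2]
    rw [(key s hs t n).1] at hn1
    rw [(key s hs t n).2] at hn2
    have hn2' : n.2.1 = 0 := by
      have := mul_eq_zero.mp hn2
      rcases this with h' | h'
      · exact absurd h' (by positivity)
      · exact h'
    simp only [Sss, Sst, Stt, gSol, GammaSol,
      pXs_eq hIo hb hbpos hs, pXt_eq, dpXs_s_eq hIo hb hbpos hs,
      dpXs_t_eq hIo hb hbpos hs, dpXt_t_eq, deriv_const', Prod.mk_add_mk, zero_add,
      he2, hem, hn2']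
    have hode := h s hs
    -- n.1 = -(deriv b s) * n.2.2 / b s ^ 3
    have hn1' : n.1 = -(deriv b s) * n.2.2 / b s ^ 3 := by
      field_simp at hn1 ⊢
      nlinarith [hn1]
    rw [hn1']
    field_simp
    linear_combination (b s * n.2.2) * hode

lemma const_of_hasDerivAt_zero (hIo : IsOpen I) (hIc : I.OrdConnected) {f : ℝ → ℝ}
    (hf : ∀ x ∈ I, HasDerivAt f 0 x) {x y : ℝ} (hx : x ∈ I) (hy : y ∈ I) : f x = f y := by
  apply (hIc.convex (𝕜 := ℝ)).is_const_of_fderivWithin_eq_zero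
    (fun z hz => ((hf z hz).differentiableAt).differentiableWithinAt) ?_ hx hy
  intro z hz
  rw [fderivWithin_of_isOpen hIo hz, (hf z hz).hasFDerivAt.fderiv]
  ext; simp

lemma ode_iff_affine (hIo : IsOpen I) (hIne : I.Nonempty) (hIc : I.OrdConnected)
    (hb : ContDiffOn ℝ 2 b I) (hbpos : ∀ s ∈ I, 0 < b s) :
    (∀ s ∈ I, b s * deriv (deriv b) s - 2 * (deriv b s) ^ 2 = 0) ↔
      ∃ α β : ℝ, ∀ s ∈ I, b s * (α * s + β) = 1 := by
  constructor
  · intro hode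
    obtain ⟨s₀, hs₀⟩ := hIne
    set h : ℝ → ℝ := fun x => (b x)⁻¹ with hh
    have hd : ∀ x ∈ I, HasDerivAt h (-(deriv b x) / (b x) ^ 2) x := fun x hx =>
      ((hdb hIo hb hx).inv (hbpos x hx).ne')
    have hder : ∀ x ∈ I, deriv h x = -(deriv b x) / (b x) ^ 2 := fun x hx => (hd x hx).deriv
    have hdd : ∀ x ∈ I, HasDerivAt (deriv h) 0 x := by
      intro x hx
      have hb0 := (hbpos x hx).ne'
      have hg : HasDerivAt (fun y => -(deriv b y) / (b y) ^ 2)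
          ((-(deriv (deriv b) x) * b x ^ 2 - -(deriv b x) * ((2 : ℕ) * b x ^ 1 * deriv b x))
            / (b x ^ 2) ^ 2) x :=
        ((hddb hIo hb hx).neg).div ((hdb hIo hb hx).pow 2) (pow_ne_zero 2 hb0)
      have hval : (-(deriv (deriv b) x) * b x ^ 2 - -(deriv b x) * ((2 : ℕ) * b x ^ 1 * deriv b x))
            / (b x ^ 2) ^ 2 = 0 := by
        have := hode x hx
        field_simp
        linear_combination (-1) * this
      rw [hval] at hg
      exact hg.congr_of_eventuallyEq (by
        filter_upwards [hIo.mem_nhds hx] with y hy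
        exact hder y hy)
    set α := deriv h s₀ with hα
    have hconst : ∀ x ∈ I, deriv h x = α := fun x hx =>
      const_of_hasDerivAt_zero hIo hIc hdd hx hs₀
    have h2 : ∀ x ∈ I, HasDerivAt (fun y => h y - α * y) 0 x := by
      intro x hx
      have := (hd x hx).sub ((hasDerivAt_id x).const_mul α)
      have hv : -(deriv b x) / (b x) ^ 2 - α * 1 = 0 := by
        rw [← hder x hx, hconst x hx]; ring
      rwa [hv] at this
    refine ⟨α, h s₀ - α * s₀, fun s hs => ?_⟩
    have hc := const_of_hasDerivAt_zero hIo hIc h2 hs hs₀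
    have hhs : α * s + (h s₀ - α * s₀) = h s := by linarith [hc]
    rw [hhs, hh]
    exact mul_inv_cancel₀ (hbpos s hs).ne'
  · rintro ⟨α, β, hab⟩ s hs
    have hne : ∀ x ∈ I, α * x + β ≠ 0 := by
      intro x hx h0
      have := hab x hx
      rw [h0, mul_zero] at this
      norm_num at this
    have hbe : ∀ x ∈ I, b x = (α * x + β)⁻¹ := by
      intro x hx
      have h1 := hab x hx
      field_simp [hne x hx]
      linarith [h1]
    have hlin : ∀ x : ℝ, HasDerivAt (fun y => α * y + β) α x := by
      intro x
      simpa using ((hasDerivAt_id x).const_mul α).add_const β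
    have hd1 : ∀ x ∈ I, HasDerivAt b (-α / (α * x + β) ^ 2) x := by
      intro x hx
      have hf : HasDerivAt (fun y => (α * y + β)⁻¹) (-α / (α * x + β) ^ 2) x :=
        (hlin x).inv (hne x hx)
      exact hf.congr_of_eventuallyEq (by
        filter_upwards [hIo.mem_nhds hx] with y hy
        exact hbe y hy)
    have hder : ∀ x ∈ I, deriv b x = -α / (α * x + β) ^ 2 := fun x hx => (hd1 x hx).deriv
    have hg : HasDerivAt (fun y => -α / (α * y + β) ^ 2) (2 * α ^ 2 / (α * s + β) ^ 3) s := by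
      have h1 : HasDerivAt (fun y => (α * y + β) ^ 2) ((2 : ℕ) * (α * s + β) ^ 1 * α) s :=
        (hlin s).pow 2
      have h2 := (h1.inv (pow_ne_zero 2 (hne s hs))).const_mul (-α)
      refine (h2.congr_deriv ?_).congr_of_eventuallyEq (Filter.Eventually.of_forall fun y => ?_)
      · have h0 := hne s hs
        field_simp
        ring
      · simp [div_eq_mul_inv]
    have hdd : HasDerivAt (deriv b) (2 * α ^ 2 / (α * s + β) ^ 3) s :=
      hg.congr_of_eventuallyEq (by
        filter_upwards [hIo.mem_nhds hs] with y hy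
        exact hder y hy)
    rw [hdd.deriv, hbe s hs, hder s hs]
    field_simp
    ring

end Aux

/-- The surface `X(s,t) = (s, t, log b(s))` has zero mean curvature
iff `1/b` is affine, equivalently iff `b·b'' - 2·b'² = 0` on `I`. -/
theorem minimal_T2_invariant_equidistant
    (I : Set ℝ) (hIo : IsOpen I) (hIne : I.Nonempty) (hIc : I.OrdConnected)
    (b : ℝ → ℝ) (hb : ContDiffOn ℝ 2 b I) (hbpos : ∀ s ∈ I, 0 < b s) :
    (MeanZero I Set.univ (fun s t => (s, t, log (b s))) ↔
      ∃ α β : ℝ, ∀ s ∈ I, b s * (α * s + β) = 1) ∧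
    (MeanZero I Set.univ (fun s t => (s, t, log (b s))) ↔
      ∀ s ∈ I, b s * deriv (deriv b) s - 2 * (deriv b s) ^ 2 = 0) := by
  have h1 := meanZero_iff_ode hIo hb hbpos
  have h2 := ode_iff_affine hIo hIne hIc hb hbpos
  exact ⟨h1.trans h2, h1⟩
end
end

section
/- For any constants c ∈ ℝ and r > 0, the cyclic surface in Sol₃ foliated by geodesics parametrized by X(s,t) = (s, c + r·cos t, log(r·sin t)), with s ∈ ℝ and t ∈ (0, π), has zero Gaussian curvature: for every (s,t) ∈ ℝ × (0,π) and every n ∈ ℝ³ with g_X(n, X_s) = g_X(n, X_t) = 0, one has g_X(S_ss, n)·g_X(S_tt, n) − g_X(S_st, n)² = 0. -/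
open Real

noncomputable section

/-- For any `c ∈ ℝ` and `r > 0`, the surface
`X(s,t) = (s, c + r·cos t, log(r·sin t))`, `s ∈ ℝ`, `t ∈ (0,π)`,
has zero Gaussian curvature. -/
theorem flat_geodesic_cyclic_example (c r : ℝ) (hr : 0 < r) :
    GaussZero Set.univ (Set.Ioo 0 π)
      (fun s t => (s, c + r * cos t, log (r * sin t))) := by
  set X : ℝ → ℝ → V3 := fun s t => (s, c + r * cos t, log (r * sin t)) with hXdef
  intro s _ t ht n hn1 hn2
  obtain ⟨ht0, htπ⟩ := ht
  have hsin : 0 < sin t := sin_pos_of_pos_of_lt_pi ht0 htπ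
  have hrs : 0 < r * sin t := mul_pos hr hsin
  -- first partials
  have hXs : ∀ s' t', pXs X s' t' = ((1:ℝ), (0:ℝ), (0:ℝ)) := by
    intro s' t'
    have h : HasDerivAt (fun u => X u t') ((1:ℝ), (0:ℝ), (0:ℝ)) s' :=
      HasDerivAt.prodMk (hasDerivAt_id s') (HasDerivAt.prodMk (hasDerivAt_const _ _) (hasDerivAt_const _ _))
    exact h.deriv
  have hXtAt : ∀ t', sin t' ≠ 0 →
      HasDerivAt (fun u => X s u) ((0:ℝ), -(r * sin t'), cos t' / sin t') t' := by
    intro t' h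
    have h1 : HasDerivAt (fun u => c + r * cos u) (-(r * sin t')) t' := by
      simpa [mul_comm] using ((hasDerivAt_cos t').const_mul r).const_add c
    have h2 : HasDerivAt (fun u => log (r * sin u)) (cos t' / sin t') t' := by
      have hne : r * sin t' ≠ 0 := mul_ne_zero hr.ne' h
      have := (((hasDerivAt_sin t').const_mul r).log hne)
      simpa [mul_comm, mul_div_mul_left _ _ hr.ne'] using this
    exact HasDerivAt.prodMk (hasDerivAt_const _ _) (h1.prodMk h2)
  have hXt : pXt X s t = ((0:ℝ), -(r * sin t), cos t / sin t) :=
    (hXtAt t hsin.ne').deriv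
  -- second partials
  have hdss : deriv (fun s' => pXs X s' t) s = (0 : V3) := by
    have : (fun s' => pXs X s' t) = fun _ => ((1:ℝ), (0:ℝ), (0:ℝ)) := by
      funext s'; exact hXs s' t
    rw [this, deriv_const]
  have hdst : deriv (fun t' => pXs X s t') t = (0 : V3) := by
    have : (fun t' => pXs X s t') = fun _ => ((1:ℝ), (0:ℝ), (0:ℝ)) := by
      funext t'; exact hXs s t'
    rw [this, deriv_const]
  have hdtt : deriv (fun t' => pXt X s t') t
      = ((0:ℝ), -(r * cos t), (-sin t * sin t - cos t * cos t) / sin t ^ 2) := by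
    have hev : (fun t' => pXt X s t')
        =ᶠ[nhds t] (fun t' => ((0:ℝ), -(r * sin t'), cos t' / sin t')) := by
      filter_upwards [Real.continuous_sin.continuousAt.eventually_ne hsin.ne'] with t' h
      exact (hXtAt t' h).deriv
    rw [hev.deriv_eq]
    have h2 : HasDerivAt (fun u => -(r * sin u)) (-(r * cos t)) t := by
      have := (((hasDerivAt_sin t).const_mul r).neg); exact this
    have h3 : HasDerivAt (fun u => cos u / sin u)
        ((-sin t * sin t - cos t * cos t) / sin t ^ 2) t :=
      (hasDerivAt_cos t).div (hasDerivAt_sin t) hsin.ne'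
    exact (HasDerivAt.prodMk (hasDerivAt_const _ _) (h2.prodMk h3)).deriv
  -- the exponential factors
  have hz : (X s t).2.2 = log (r * sin t) := rfl
  have he1 : exp (2 * (X s t).2.2) = (r * sin t) ^ 2 := by
    rw [hz, two_mul, exp_add, exp_log hrs]; ring
  have he2 : exp (-(2 * (X s t).2.2)) = ((r * sin t) ^ 2)⁻¹ := by
    rw [exp_neg, he1]
  -- normality conditions
  have hn1' : n.1 = 0 := by
    have := hn1
    simp only [gSol, hXs, he1, he2] at this
    have h2 : (r * sin t) ^ 2 ≠ 0 := by positivity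
    field_simp at this
    have h5 : (r * sin t) ^ 4 * n.1 = 0 := by linear_combination this
    exact (mul_eq_zero.mp h5).resolve_left (by positivity)
  have hn2' : ((r * sin t) ^ 2)⁻¹ * n.2.1 * (-(r * sin t)) + n.2.2 * (cos t / sin t) = 0 := by
    have := hn2
    simp only [gSol, hXt, he1, he2, hn1'] at this
    linarith [this]
  -- unfold everything
  simp only [gSol, Sss, Sst, Stt, GammaSol, hXs, hXt, hdss, hdst, hdtt, he1, he2,
    hn1', deriv_const, Prod.fst_add, Prod.snd_add, Prod.mk_add_mk, Prod.fst_zero, Prod.snd_zero]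
  have hs2 : (sin t) ^ 2 ≠ 0 := by positivity
  have hr2 : (r * sin t) ^ 2 ≠ 0 := by positivity
  field_simp at hn2' ⊢
  linear_combination (r ^ 5 * sin t ^ 6 * n.2.2 * cos t) * hn2'
end
end

section
/- A surface in Sol₃ of the form X(s,t) = (s, t, log b(s)), where b : I → ℝ is twice continuously differentiable and positive on a nonempty open interval I and t ranges over ℝ, has zero Gaussian curvature if and only if there exist λ, μ ∈ ℝ with 1/b(s)² = −s² + λ·s + μ for all s ∈ I (so b(s) = ±1/√(−s² + λs + μ)). Equivalently, the Gaussian curvature vanishes identically if and only if b(s)⁴ + 3·b'(s)² − b(s)·b''(s) = 0 on I. -/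
open Real

noncomputable section

section AuxFlat

variable (I : Set ℝ) (hIo : IsOpen I) (b : ℝ → ℝ) (hb : ContDiffOn ℝ 2 b I)
    (hbpos : ∀ s ∈ I, 0 < b s)

section
include hIo hb hbpos

lemma aux_hXs {s : ℝ} (hs : s ∈ I) (t : ℝ) :
    pXs (fun s t => (s, t, log (b s))) s t = (1, 0, deriv b s / b s) := by
  have hd : HasDerivAt b (deriv b s) s :=
    ((hb.contDiffAt (hIo.mem_nhds hs)).differentiableAt two_ne_zero).hasDerivAt
  have hl : HasDerivAt (fun s' => log (b s')) (deriv b s / b s) s := hd.log (hbpos s hs).ne'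
  exact (HasDerivAt.prodMk (hasDerivAt_id s) (HasDerivAt.prodMk (hasDerivAt_const s t) hl)).deriv

omit hIo hb hbpos in
lemma aux_hXt (s t : ℝ) :
    pXt (fun s t => (s, t, log (b s))) s t = (0, 1, 0) :=
  (HasDerivAt.prodMk (hasDerivAt_const t s) (HasDerivAt.prodMk (hasDerivAt_id t) (hasDerivAt_const t (log (b s))))).deriv

lemma aux_hSss {s : ℝ} (hs : s ∈ I) (t : ℝ) :
    Sss (fun s t => (s, t, log (b s))) s t =
      (2 * (deriv b s / b s), 0,
        (deriv (deriv b) s * b s - deriv b s * deriv b s) / (b s)^2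
          - exp (2 * log (b s)) + exp (-(2 * log (b s))) * 0 * 0) := by
  have hb1 : ContDiffOn ℝ 1 (deriv b) I := by
    exact hb.deriv_of_isOpen hIo (show (1:WithTop ℕ∞)+1 ≤ 2 by norm_num)
  have hd : HasDerivAt b (deriv b s) s :=
    ((hb.contDiffAt (hIo.mem_nhds hs)).differentiableAt two_ne_zero).hasDerivAt
  have hd2 : HasDerivAt (deriv b) (deriv (deriv b) s) s :=
    ((hb1.contDiffAt (hIo.mem_nhds hs)).differentiableAt one_ne_zero).hasDerivAt
  have h1 : deriv (fun s' => pXs (fun s t => (s, t, log (b s))) s' t) s =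
      (0, 0, (deriv (deriv b) s * b s - deriv b s * deriv b s) / (b s)^2) := by
    have hev : (fun s' => pXs (fun s t => (s, t, log (b s))) s' t) =ᶠ[nhds s]
        (fun s' => ((1 : ℝ), (0 : ℝ), deriv b s' / b s')) := by
      filter_upwards [hIo.mem_nhds hs] with x hx
      exact aux_hXs I hIo b hb hbpos hx t
    rw [hev.deriv_eq]
    have hq : HasDerivAt (fun s' => deriv b s' / b s')
        ((deriv (deriv b) s * b s - deriv b s * deriv b s) / (b s)^2) s :=
      hd2.div hd (hbpos s hs).ne'
    exact (HasDerivAt.prodMk (hasDerivAt_const s (1:ℝ)) (HasDerivAt.prodMk (hasDerivAt_const s (0:ℝ)) hq)).deriv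
  rw [Sss, h1, aux_hXs I hIo b hb hbpos hs t]
  show ((0:ℝ) + _, (0:ℝ) + _, _ + _) = _
  simp [GammaSol]
  ring_nf
  constructor <;> trivial

lemma aux_hSst {s : ℝ} (hs : s ∈ I) (t : ℝ) :
    Sst (fun s t => (s, t, log (b s))) s t = (0, -(deriv b s / b s), 0) := by
  have h1 : deriv (fun t' => pXs (fun s t => (s, t, log (b s))) s t') t = (0, 0, 0) := by
    have : (fun t' => pXs (fun s t => (s, t, log (b s))) s t') =
        fun _ => ((1:ℝ), (0:ℝ), deriv b s / b s) :=
      funext fun t' => aux_hXs I hIo b hb hbpos hs t'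
    rw [this, deriv_const]; rfl
  rw [Sst, h1, aux_hXs I hIo b hb hbpos hs t, aux_hXt b]
  show ((0:ℝ) + _, (0:ℝ) + _, (0:ℝ) + _) = _
  simp [GammaSol]

omit hIo hb hbpos in
lemma aux_hStt (s t : ℝ) :
    Stt (fun s t => (s, t, log (b s))) s t = (0, 0, exp (-(2 * log (b s)))) := by
  have h1 : deriv (fun t' => pXt (fun s t => (s, t, log (b s))) s t') t = (0, 0, 0) := by
    have : (fun t' => pXt (fun s t => (s, t, log (b s))) s t') =
        fun _ => ((0:ℝ), (1:ℝ), (0:ℝ)) := funext fun t' => aux_hXt b s t'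
    rw [this, deriv_const]; rfl
  rw [Stt, h1, aux_hXt b]
  show ((0:ℝ) + _, (0:ℝ) + _, (0:ℝ) + _) = _
  simp [GammaSol]
end

end AuxFlat

/-- The surface `X(s,t) = (s, t, log b(s))` has zero Gaussian curvature
iff `1/b² = -s² + λs + μ`, equivalently iff `b⁴ + 3b'² - b·b'' = 0` on `I`. -/
theorem flat_T2_invariant_equidistant
    (I : Set ℝ) (hIo : IsOpen I) (hIne : I.Nonempty) (hIc : I.OrdConnected)
    (b : ℝ → ℝ) (hb : ContDiffOn ℝ 2 b I) (hbpos : ∀ s ∈ I, 0 < b s) :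
    (GaussZero I Set.univ (fun s t => (s, t, log (b s))) ↔
      ∃ lam mu : ℝ, ∀ s ∈ I, 1 / (b s) ^ 2 = -s ^ 2 + lam * s + mu) ∧
    (GaussZero I Set.univ (fun s t => (s, t, log (b s))) ↔
      ∀ s ∈ I, (b s) ^ 4 + 3 * (deriv b s) ^ 2 - b s * deriv (deriv b) s = 0) := by
  have hIco : Convex ℝ I := convex_iff_ordConnected.mpr hIc
  have hb1 : ContDiffOn ℝ 1 (deriv b) I :=
    hb.deriv_of_isOpen hIo (show (1:WithTop ℕ∞)+1 ≤ 2 by norm_num)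
  have hd : ∀ s ∈ I, HasDerivAt b (deriv b s) s := fun s hs =>
    ((hb.contDiffAt (hIo.mem_nhds hs)).differentiableAt two_ne_zero).hasDerivAt
  have hd2 : ∀ s ∈ I, HasDerivAt (deriv b) (deriv (deriv b) s) s := fun s hs =>
    ((hb1.contDiffAt (hIo.mem_nhds hs)).differentiableAt one_ne_zero).hasDerivAt
  have hne : ∀ s ∈ I, b s ≠ 0 := fun s hs => (hbpos s hs).ne'
  have hexp : ∀ s ∈ I, exp (2 * log (b s)) = (b s)^2 := by
    intro s hs
    rw [show (2:ℝ) * log (b s) = log (b s) + log (b s) by ring, exp_add, exp_log (hbpos s hs)]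
    ring
  have hexpm : ∀ s ∈ I, exp (-(2 * log (b s))) = ((b s)^2)⁻¹ := by
    intro s hs; rw [exp_neg, hexp s hs]
  -- Gauss iff ODE
  have hGO : GaussZero I Set.univ (fun s t => (s, t, log (b s))) ↔
      ∀ s ∈ I, (b s)^4 + 3*(deriv b s)^2 - b s * deriv (deriv b) s = 0 := by
    constructor
    · intro hG s hs
      have hB := hbpos s hs
      have hBne := hne s hs
      have hn1 : gSol ((fun (s t : ℝ) => (s, t, log (b s))) s 0)
          (-(deriv b s), 0, (b s)^3) (pXs (fun s t => (s, t, log (b s))) s 0) = 0 := by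
        rw [aux_hXs I hIo b hb hbpos hs 0]
        simp only [gSol, hexp s hs, hexpm s hs]
        field_simp
        ring
      have hn2 : gSol ((fun (s t : ℝ) => (s, t, log (b s))) s 0)
          (-(deriv b s), 0, (b s)^3) (pXt (fun s t => (s, t, log (b s))) s 0) = 0 := by
        rw [aux_hXt b s 0]
        simp [gSol]
      have H := hG s hs 0 (Set.mem_univ 0) (-(deriv b s), 0, (b s)^3) hn1 hn2
      rw [aux_hSss I hIo b hb hbpos hs 0, aux_hSst I hIo b hb hbpos hs 0,
        aux_hStt b s 0] at H
      simp only [gSol, hexp s hs, hexpm s hs] at H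
      field_simp at H
      have h7 : (b s)^8 ≠ 0 := pow_ne_zero _ hBne
      have hfac : (b s)^8 * ((b s)^4 + 3*(deriv b s)^2 - b s * deriv (deriv b) s) = 0 := by
        linear_combination -H
      exact (mul_eq_zero.mp hfac).resolve_left h7
    · intro hODE s hs t _ n hn1 hn2
      obtain ⟨n1, n2, n3⟩ := n
      have hB := hbpos s hs
      have hBne := hne s hs
      rw [aux_hXt b s t] at hn2
      rw [aux_hXs I hIo b hb hbpos hs t] at hn1
      simp only [gSol, hexp s hs, hexpm s hs] at hn1 hn2
      have hn2' : n2 = 0 := by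
        field_simp at hn2
        simpa using hn2
      subst hn2'
      rw [aux_hSss I hIo b hb hbpos hs t, aux_hSst I hIo b hb hbpos hs t,
        aux_hStt b s t]
      simp only [gSol, hexp s hs, hexpm s hs]
      field_simp at hn1 ⊢
      linear_combination (2*b s*deriv b s*n3) * hn1 - (n3^2*(b s)^2) * (hODE s hs)
  refine ⟨hGO.trans ?_, hGO⟩
  -- ODE iff quadratic
  have hsqne : ∀ s ∈ I, ((b s)^2)^2 ≠ 0 := fun s hs => pow_ne_zero 2 (pow_ne_zero 2 (hne s hs))
  set F0 : ℝ → ℝ := fun s => -(2*(b s * deriv b s))/((b s)^2)^2 with hF0def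
  have key2 : ∀ s ∈ I, HasDerivAt (fun s' => ((b s')^2)⁻¹) (F0 s) s := by
    intro s hs
    have h := ((hd s hs).pow 2).inv (pow_ne_zero 2 (hne s hs))
    refine h.congr_deriv (Eq.symm ?_)
    simp only [hF0def, Pi.pow_apply]
    push_cast
    ring
  have key3 : ∀ s ∈ I, HasDerivAt F0
      ((-(2*((deriv b s)^2 + b s * deriv (deriv b) s))*((b s)^2)^2
        + (2*(b s * deriv b s))*(4*(b s)^3*deriv b s))/(((b s)^2)^2)^2) s := by
    intro s hs
    have hu : HasDerivAt (fun s' => -(2*(b s' * deriv b s')))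
        (-(2*(deriv b s * deriv b s + b s * deriv (deriv b) s))) s :=
      (((hd s hs).mul (hd2 s hs)).const_mul 2).neg
    have hv : HasDerivAt (fun s' => ((b s')^2)^2)
        ((2:ℕ)*((b s)^2)^1*((2:ℕ)*(b s)^1*deriv b s)) s := ((hd s hs).pow 2).pow 2
    have h := hu.div hv (hsqne s hs)
    refine h.congr_deriv (Eq.symm ?_)
    push_cast
    ring
  constructor
  · intro hODE
    obtain ⟨s₀, hs₀⟩ := hIne
    have hV : ∀ s ∈ I, HasDerivAt (fun s' => F0 s' + 2*s') 0 s := by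
      intro s hs
      have h := (key3 s hs).add ((hasDerivAt_id s).const_mul 2)
      refine h.congr_deriv (Eq.symm ?_)
      have hO := hODE s hs
      have hBne := hne s hs
      field_simp
      linear_combination (-2) * hO
    have hconst : ∀ x ∈ I, ∀ y ∈ I, (fun s' => F0 s' + 2*s') x = (fun s' => F0 s' + 2*s') y := by
      intro x hx y hy
      refine hIco.is_const_of_fderivWithin_eq_zero
        (fun z hz => ((hV z hz).differentiableAt).differentiableWithinAt) ?_ hx hy
      intro z hz
      have h0 : HasFDerivAt (fun s' => F0 s' + 2*s')
          (ContinuousLinearMap.smulRight (1 : ℝ →L[ℝ] ℝ) (0:ℝ)) z := (hV z hz).hasFDerivAt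
      have : ContinuousLinearMap.smulRight (1 : ℝ →L[ℝ] ℝ) (0:ℝ) = 0 := by
        ext; simp
      rw [this] at h0
      exact (h0.hasFDerivWithinAt).fderivWithin (hIo.uniqueDiffOn z hz)
    set lam : ℝ := F0 s₀ + 2*s₀ with hlam
    have hFlam : ∀ s ∈ I, F0 s + 2*s = lam := fun s hs => hconst s hs s₀ hs₀
    have hG : ∀ s ∈ I, HasDerivAt (fun s' => ((b s')^2)⁻¹ + s'^2 - lam*s') 0 s := by
      intro s hs
      have h := ((key2 s hs).add (hasDerivAt_pow 2 s)).sub ((hasDerivAt_id s).const_mul lam)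
      have hval : F0 s + (2:ℕ)*s^(2-1) - lam*1 = 0 := by
        push_cast
        have := hFlam s hs
        simp
        linarith
      rw [hval] at h
      exact h
    have hGconst : ∀ x ∈ I, ∀ y ∈ I,
        (fun s' => ((b s')^2)⁻¹ + s'^2 - lam*s') x = (fun s' => ((b s')^2)⁻¹ + s'^2 - lam*s') y := by
      intro x hx y hy
      refine hIco.is_const_of_fderivWithin_eq_zero
        (fun z hz => ((hG z hz).differentiableAt).differentiableWithinAt) ?_ hx hy
      intro z hz
      have h0 : HasFDerivAt (fun s' => ((b s')^2)⁻¹ + s'^2 - lam*s')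
          (ContinuousLinearMap.smulRight (1 : ℝ →L[ℝ] ℝ) (0:ℝ)) z := (hG z hz).hasFDerivAt
      have : ContinuousLinearMap.smulRight (1 : ℝ →L[ℝ] ℝ) (0:ℝ) = 0 := by
        ext; simp
      rw [this] at h0
      exact (h0.hasFDerivWithinAt).fderivWithin (hIo.uniqueDiffOn z hz)
    refine ⟨lam, ((b s₀)^2)⁻¹ + s₀^2 - lam*s₀, fun s hs => ?_⟩
    have h := hGconst s hs s₀ hs₀
    simp only at h
    rw [one_div]
    linarith
  · rintro ⟨lam, mu, hq⟩ s hs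
    have h1 : ∀ x ∈ I, F0 x = -(2*x) + lam := by
      intro x hx
      have hev : (fun s' => ((b s')^2)⁻¹) =ᶠ[nhds x] (fun s' => -s'^2 + lam*s' + mu) := by
        filter_upwards [hIo.mem_nhds hx] with y hy
        rw [← one_div]
        exact hq y hy
      have heq := hev.deriv_eq
      rw [(key2 x hx).deriv] at heq
      have hp : HasDerivAt (fun s' : ℝ => -s'^2 + lam*s' + mu) (-(2*x) + lam) x := by
        have h2 := (((hasDerivAt_pow 2 x).neg).add ((hasDerivAt_id x).const_mul lam)).add_const mu
        refine h2.congr_deriv (Eq.symm ?_)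
        push_cast
        ring
      rw [hp.deriv] at heq
      exact heq
    have hev2 : F0 =ᶠ[nhds s] fun x => -(2*x) + lam := by
      filter_upwards [hIo.mem_nhds hs] with y hy
      exact h1 y hy
    have h3 := hev2.deriv_eq
    rw [(key3 s hs).deriv] at h3
    have h4 : HasDerivAt (fun x : ℝ => -(2*x) + lam) (-2) s := by
      have := (((hasDerivAt_id s).const_mul 2).neg).add_const lam
      simpa using this
    rw [h4.deriv] at h3
    have hBne := hne s hs
    field_simp at h3
    have hfac : (b s)^4 * ((b s)^4 + 3*(deriv b s)^2 - b s * deriv (deriv b) s) = 0 := by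
      linear_combination (b s)^4 * h3
    exact (mul_eq_zero.mp hfac).resolve_left (pow_ne_zero _ hBne)
end
end

section
/- A cyclic surface in Sol₃ foliated by horocycles of the form X(s,t) = (s, t, a(s)), where a : I → ℝ is twice continuously differentiable on a nonempty open interval I and t ranges over ℝ, has zero Gaussian curvature if and only if there exist λ, μ ∈ ℝ with e^{−2·a(s)} = −s² + λ·s + μ for all s ∈ I (i.e. a(s) = −(1/2)·log(−s² + λs + μ)). Equivalently, the Gaussian curvature vanishes identically if and only if a''(s) − 2·a'(s)² − e^{2·a(s)} = 0 on I. -/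
open Real

noncomputable section

namespace FlatAux

variable {I : Set ℝ} {a : ℝ → ℝ} {s t : ℝ}

lemma hasDerivAt_Xs (hd : DifferentiableAt ℝ a s) (t : ℝ) :
    HasDerivAt (fun s' => ((s', t, a s') : V3)) ((1, 0, deriv a s) : V3) s :=
  HasDerivAt.prodMk (hasDerivAt_id s) (HasDerivAt.prodMk (hasDerivAt_const s t) hd.hasDerivAt)

lemma pXs_eq (hd : DifferentiableAt ℝ a s) (t : ℝ) :
    pXs (fun s t => ((s, t, a s) : V3)) s t = (1, 0, deriv a s) :=
  (hasDerivAt_Xs hd t).deriv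

lemma pXt_eq (a : ℝ → ℝ) (s t : ℝ) : pXt (fun s t => ((s, t, a s) : V3)) s t = (0, 1, 0) :=
  HasDerivAt.deriv <|
    HasDerivAt.prodMk (hasDerivAt_const t s) (HasDerivAt.prodMk (hasDerivAt_id t) (hasDerivAt_const t (a s)))

section

variable (hIo : IsOpen I) (ha : ContDiffOn ℝ 2 a I) (hs : s ∈ I)
include hIo ha hs

lemma diff_a : DifferentiableAt ℝ a s :=
  (ha.differentiableOn (by norm_num)).differentiableAt (hIo.mem_nhds hs)

lemma diff_da : DifferentiableAt ℝ (deriv a) s :=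
  ((ha.deriv_of_isOpen (m := 1) hIo (by norm_num)).differentiableOn
    one_ne_zero).differentiableAt (hIo.mem_nhds hs)

lemma Sss_eq (t : ℝ) :
    Sss (fun s t => ((s, t, a s) : V3)) s t =
      (2 * deriv a s, 0, deriv (deriv a) s - exp (2 * a s)) := by
  have hev : (fun s' => pXs (fun s t => ((s, t, a s) : V3)) s' t) =ᶠ[nhds s]
      (fun s' => ((1, 0, deriv a s') : V3)) := by
    filter_upwards [hIo.mem_nhds hs] with x hx
    exact pXs_eq (diff_a hIo ha hx) t
  have h1 : deriv (fun s' => pXs (fun s t => ((s, t, a s) : V3)) s' t) s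
      = ((0, 0, deriv (deriv a) s) : V3) := by
    rw [hev.deriv_eq]
    exact HasDerivAt.deriv <|
      HasDerivAt.prodMk (hasDerivAt_const s (1 : ℝ)) (HasDerivAt.prodMk (hasDerivAt_const s (0 : ℝ))
        (diff_da hIo ha hs).hasDerivAt)
  rw [Sss, h1, pXs_eq (diff_a hIo ha hs) t]
  simp only [GammaSol, Prod.mk_add_mk, Prod.mk.injEq]
  refine ⟨by ring, by ring, by ring⟩

lemma Sst_eq (t : ℝ) :
    Sst (fun s t => ((s, t, a s) : V3)) s t = (0, -(deriv a s), 0) := by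
  have h1 : deriv (fun t' => pXs (fun s t => ((s, t, a s) : V3)) s t') t = (0 : V3) := by
    have : (fun t' => pXs (fun s t => ((s, t, a s) : V3)) s t')
        = fun _ => ((1, 0, deriv a s) : V3) := by
      funext t'; exact pXs_eq (diff_a hIo ha hs) t'
    rw [this, deriv_const]
  rw [Sst, h1, pXs_eq (diff_a hIo ha hs) t, pXt_eq a s t]
  simp only [GammaSol]
  show ((0 : ℝ), (0 : ℝ), (0 : ℝ)) + _ = _
  simp only [Prod.mk_add_mk, Prod.mk.injEq]
  refine ⟨by ring, by ring, by ring⟩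

lemma Stt_eq (t : ℝ) :
    Stt (fun s t => ((s, t, a s) : V3)) s t = (0, 0, exp (-(2 * a s))) := by
  have h1 : deriv (fun t' => pXt (fun s t => ((s, t, a s) : V3)) s t') t = (0 : V3) := by
    have : (fun t' => pXt (fun s t => ((s, t, a s) : V3)) s t')
        = fun _ => ((0, 1, 0) : V3) := by
      funext t'; exact pXt_eq a s t'
    rw [this, deriv_const]
  rw [Stt, h1, pXt_eq a s t]
  simp only [GammaSol]
  show ((0 : ℝ), (0 : ℝ), (0 : ℝ)) + _ = _
  simp only [Prod.mk_add_mk, Prod.mk.injEq]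
  refine ⟨by ring, by ring, by ring⟩

end

/-- Reduction of zero Gaussian curvature to the ODE. -/
lemma gauss_iff_ode (hIo : IsOpen I) (ha : ContDiffOn ℝ 2 a I) :
    GaussZero I Set.univ (fun s t => ((s, t, a s) : V3)) ↔
      ∀ s ∈ I, deriv (deriv a) s - 2 * (deriv a s) ^ 2 - exp (2 * a s) = 0 := by
  constructor
  · intro hG s hs
    have hmul : exp (2 * a s) * exp (-(2 * a s)) = 1 := by
      rw [← exp_add]; simp
    have hcur := hG s hs 0 trivial (-(deriv a s) * exp (-(2 * a s)), 0, 1)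
      (by
        simp only [gSol, pXs_eq (diff_a hIo ha hs) 0]
        linear_combination (-(deriv a s)) * hmul)
      (by
        simp only [gSol, pXt_eq a s 0]
        ring)
    rw [Sss_eq hIo ha hs 0, Sst_eq hIo ha hs 0, Stt_eq hIo ha hs 0] at hcur
    simp only [gSol] at hcur
    linear_combination exp (2 * a s) * hcur +
      (2 * (deriv a s) ^ 2 * (exp (2 * a s) * exp (-(2 * a s)) + 1)
        - deriv (deriv a) s + exp (2 * a s)) * hmul
  · intro hode s hs t _ n hn1 hn2
    have hode' := hode s hs
    rw [Sss_eq hIo ha hs t, Sst_eq hIo ha hs t, Stt_eq hIo ha hs t]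
    rw [pXs_eq (diff_a hIo ha hs) t] at hn1
    rw [pXt_eq a s t] at hn2
    simp only [gSol] at hn1 hn2 ⊢
    linear_combination (2 * deriv a s * exp (-(2 * a s)) * n.2.2) * hn1
      + (exp (-(2 * a s)) * n.2.2 ^ 2) * hode'
      - (exp (-(2 * a s)) * (deriv a s) ^ 2 * n.2.1) * hn2

/-- The basic derivative of `exp (-(2 * a s))`. -/
lemma hasDerivAt_f (hd : DifferentiableAt ℝ a s) :
    HasDerivAt (fun s' => exp (-(2 * a s'))) (exp (-(2 * a s)) * (-(2 * deriv a s))) s := by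
  have h1 : HasDerivAt (fun s' => -(2 * a s')) (-(2 * deriv a s)) s :=
    (hd.hasDerivAt.const_mul 2).neg
  exact h1.exp

/-- On a convex open set, a function with vanishing derivative is constant. -/
lemma const_of_hasDerivAt_zero {f : ℝ → ℝ} (hIo : IsOpen I) (hIc : Convex ℝ I)
    (hf : ∀ x ∈ I, HasDerivAt f 0 x) {x y : ℝ} (hx : x ∈ I) (hy : y ∈ I) : f x = f y := by
  apply hIc.is_const_of_fderivWithin_eq_zero
    (fun z hz => ((hf z hz).differentiableAt).differentiableWithinAt)
    (fun z hz => ?_) hx hy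
  rw [fderivWithin_of_isOpen hIo hz, (hf z hz).hasFDerivAt.fderiv]
  ext u
  simp

/-- Integration of the ODE: existence of the quadratic expression. -/
lemma ode_to_poly (hIo : IsOpen I) (hconv : Convex ℝ I) (ha : ContDiffOn ℝ 2 a I)
    (hode : ∀ s ∈ I, deriv (deriv a) s - 2 * (deriv a s) ^ 2 - exp (2 * a s) = 0)
    {s₀ : ℝ} (hs₀ : s₀ ∈ I) (lam mu : ℝ)
    (hlam : lam = exp (-(2 * a s₀)) * (-(2 * deriv a s₀)) + 2 * s₀)
    (hmu : mu = exp (-(2 * a s₀)) + s₀ ^ 2 - lam * s₀) :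
    ∀ s ∈ I, exp (-(2 * a s)) = -s ^ 2 + lam * s + mu := by
  have hdF1 : ∀ x ∈ I,
      HasDerivAt (fun s => exp (-(2 * a s)) * (-(2 * deriv a s)) + 2 * s - lam) 0 x := by
    intro x hx
    have hda := diff_a hIo ha hx
    have hdda := diff_da hIo ha hx
    have h1 : HasDerivAt (fun s' => exp (-(2 * a s')) * (-(2 * deriv a s')))
        (exp (-(2 * a x)) * (-(2 * deriv a x)) * (-(2 * deriv a x))
          + exp (-(2 * a x)) * (-(2 * deriv (deriv a) x))) x :=
      (hasDerivAt_f hda).mul ((hdda.hasDerivAt.const_mul 2).neg)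
    have hlin : HasDerivAt (fun s : ℝ => 2 * s) 2 x := by
      simpa using (hasDerivAt_id x).const_mul (2 : ℝ)
    have h2 := (h1.add hlin).sub_const lam
    have key : exp (-(2 * a x)) * (-(2 * deriv a x)) * (-(2 * deriv a x))
        + exp (-(2 * a x)) * (-(2 * deriv (deriv a) x)) + 2 = 0 := by
      have hode' := hode x hx
      have hmulx : exp (2 * a x) * exp (-(2 * a x)) = 1 := by
        rw [← exp_add]; simp
      linear_combination (-2 * exp (-(2 * a x))) * hode' - 2 * hmulx
    rwa [key] at h2
  have hF1c : ∀ x ∈ I, exp (-(2 * a x)) * (-(2 * deriv a x)) + 2 * x - lam = 0 := by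
    intro x hx
    have h := const_of_hasDerivAt_zero hIo hconv hdF1 hx hs₀
    rw [h, hlam]; ring
  have hdG : ∀ x ∈ I,
      HasDerivAt (fun s => exp (-(2 * a s)) + s ^ 2 - lam * s - mu) 0 x := by
    intro x hx
    have hda := diff_a hIo ha hx
    have hsq : HasDerivAt (fun s : ℝ => s ^ 2) (2 * x) x := by
      simpa [mul_comm] using hasDerivAt_pow 2 x
    have hlin : HasDerivAt (fun s : ℝ => lam * s) lam x := by
      simpa using (hasDerivAt_id x).const_mul lam
    have h1 := (((hasDerivAt_f hda).add hsq).sub hlin).sub_const mu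
    have h2 : exp (-(2 * a x)) * (-(2 * deriv a x)) + 2 * x - lam = 0 := hF1c x hx
    have h3 : exp (-(2 * a x)) * (-(2 * deriv a x)) + 2 * x - lam = (0 : ℝ) := h2
    rw [show exp (-(2 * a x)) * (-(2 * deriv a x)) + 2 * x - lam = (0 : ℝ) from h2] at h1
    exact h1
  intro s hs
  have h := const_of_hasDerivAt_zero hIo hconv hdG hs hs₀
  have h2 : exp (-(2 * a s₀)) + s₀ ^ 2 - lam * s₀ - mu = 0 := by rw [hmu]; ring
  rw [h2] at h
  linarith

end FlatAux

open FlatAux in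
/-- The cyclic surface `X(s,t) = (s, t, a(s))` foliated by horocycles
has zero Gaussian curvature iff `e^{-2a(s)} = -s² + λs + μ`, equivalently iff
`a'' - 2a'² - e^{2a} = 0` on `I`. -/
theorem flat_foliated_by_horocycles
    (I : Set ℝ) (hIo : IsOpen I) (hIne : I.Nonempty) (hIc : I.OrdConnected)
    (a : ℝ → ℝ) (ha : ContDiffOn ℝ 2 a I) :
    (GaussZero I Set.univ (fun s t => (s, t, a s)) ↔
      ∃ lam mu : ℝ, ∀ s ∈ I, exp (-(2 * a s)) = -s ^ 2 + lam * s + mu) ∧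
    (GaussZero I Set.univ (fun s t => (s, t, a s)) ↔
      ∀ s ∈ I, deriv (deriv a) s - 2 * (deriv a s) ^ 2 - exp (2 * a s) = 0) := by
  have hconv : Convex ℝ I := hIc.convex
  have hmain := gauss_iff_ode hIo ha
  have hEF : (∀ s ∈ I, deriv (deriv a) s - 2 * (deriv a s) ^ 2 - exp (2 * a s) = 0) ↔
      ∃ lam mu : ℝ, ∀ s ∈ I, exp (-(2 * a s)) = -s ^ 2 + lam * s + mu := by
    constructor
    · intro hode
      obtain ⟨s₀, hs₀⟩ := hIne
      exact ⟨_, _, ode_to_poly hIo hconv ha hode hs₀ _ _ rfl rfl⟩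
    · rintro ⟨lam, mu, hfm⟩ s hs
      have hda := diff_a hIo ha hs
      have hdda := diff_da hIo ha hs
      have hd2 : ∀ x ∈ I, exp (-(2 * a x)) * (-(2 * deriv a x)) = -(2 * x) + lam := by
        intro x hx
        have hev : (fun s' => exp (-(2 * a s'))) =ᶠ[nhds x]
            (fun s' => -s' ^ 2 + lam * s' + mu) := by
          filter_upwards [hIo.mem_nhds hx] with y hy
          exact hfm y hy
        have hq : HasDerivAt (fun s' : ℝ => -s' ^ 2 + lam * s' + mu)
            (-(2 * x) + lam) x := by
          have hsq : HasDerivAt (fun s : ℝ => s ^ 2) (2 * x) x := by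
            simpa [mul_comm] using hasDerivAt_pow 2 x
          have hlin : HasDerivAt (fun s : ℝ => lam * s) lam x := by
            simpa using (hasDerivAt_id x).const_mul lam
          exact (hsq.neg.add hlin).add_const mu
        rw [← (hasDerivAt_f (diff_a hIo ha hx)).deriv, hev.deriv_eq, hq.deriv]
      have hev2 : (fun x => exp (-(2 * a x)) * (-(2 * deriv a x))) =ᶠ[nhds s]
          (fun x : ℝ => -(2 * x) + lam) := by
        filter_upwards [hIo.mem_nhds hs] with x hx
        exact hd2 x hx
      have hL : HasDerivAt (fun x => exp (-(2 * a x)) * (-(2 * deriv a x)))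
          (exp (-(2 * a s)) * (-(2 * deriv a s)) * (-(2 * deriv a s))
            + exp (-(2 * a s)) * (-(2 * deriv (deriv a) s))) s :=
        (hasDerivAt_f hda).mul ((hdda.hasDerivAt.const_mul 2).neg)
      have hR : HasDerivAt (fun x : ℝ => -(2 * x) + lam) (-2) s := by
        simpa using (((hasDerivAt_id s).const_mul (2 : ℝ)).neg).add_const lam
      have heq : exp (-(2 * a s)) * (-(2 * deriv a s)) * (-(2 * deriv a s))
          + exp (-(2 * a s)) * (-(2 * deriv (deriv a) s)) = -2 := by
        have h := hL.deriv
        rw [hev2.deriv_eq, hR.deriv] at h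
        exact h.symm
      have hmul : exp (2 * a s) * exp (-(2 * a s)) = 1 := by
        rw [← exp_add]; simp
      linear_combination (-(exp (2 * a s)) / 2) * heq
        + (-(deriv (deriv a) s - 2 * (deriv a s) ^ 2)) * hmul
  exact ⟨hmain.trans hEF, hmain⟩
end
end

section
/- There are no minimal surfaces in Sol₃ foliated by arcs of circles in the horizontal planes z = const. Precisely: let I, J ⊆ ℝ be nonempty open intervals and let a, b, r : I → ℝ be twice continuously differentiable with r(s) > 0 for all s ∈ I, and define X : I × J → ℝ³ by X(s,t) = (a(s) + r(s)·e^{−s}·cos t, b(s) + r(s)·e^{s}·sin t, s). Then X does not have zero mean curvature, i.e. it is NOT the case that for every (s,t) ∈ I × J and every n ∈ ℝ³ with g_X(n, X_s) = g_X(n, X_t) = 0 one has E·g_X(S_tt, n) − 2F·g_X(S_st, n) + G·g_X(S_ss, n) = 0. -/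
open Real

noncomputable section

lemma analyticAt_csin (z : ℂ) : AnalyticAt ℂ Complex.sin z := by
  have h : Complex.sin = fun z => (Complex.exp (-z * Complex.I) - Complex.exp (z * Complex.I)) * Complex.I / 2 := rfl
  rw [h]
  apply AnalyticAt.div
  · exact ((analyticAt_cexp.comp ((analyticAt_id.neg).mul analyticAt_const)).sub
      (analyticAt_cexp.comp (analyticAt_id.mul analyticAt_const))).mul analyticAt_const
  · exact analyticAt_const
  · norm_num

lemma analyticAt_ccos (z : ℂ) : AnalyticAt ℂ Complex.cos z := by
  have h : Complex.cos = fun z => (Complex.exp (z * Complex.I) + Complex.exp (-z * Complex.I)) / 2 := rfl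
  rw [h]
  apply AnalyticAt.div
  · exact ((analyticAt_cexp.comp (analyticAt_id.mul analyticAt_const)).add
      (analyticAt_cexp.comp ((analyticAt_id.neg).mul analyticAt_const)))
  · exact analyticAt_const
  · norm_num

lemma analyticAt_rsin (x : ℝ) : AnalyticAt ℝ Real.sin x := by
  have h : Real.sin = fun x : ℝ => Complex.reCLM (Complex.sin (Complex.ofRealCLM x)) := by
    funext x; simp [Complex.sin_ofReal_re]
  rw [h]
  exact (Complex.reCLM.analyticAt _).comp
    (((analyticAt_csin _).restrictScalars).comp (Complex.ofRealCLM.analyticAt _))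

lemma analyticAt_rcos (x : ℝ) : AnalyticAt ℝ Real.cos x := by
  have h : Real.cos = fun x : ℝ => Complex.reCLM (Complex.cos (Complex.ofRealCLM x)) := by
    funext x; simp [Complex.cos_ofReal_re]
  rw [h]
  exact (Complex.reCLM.analyticAt _).comp
    (((analyticAt_ccos _).restrictScalars).comp (Complex.ofRealCLM.analyticAt _))


lemma derivFacts {f : ℝ → ℝ} {I : Set ℝ} (hI : IsOpen I) (hf : ContDiffOn ℝ 2 f I) :
    (∀ s ∈ I, HasDerivAt f (deriv f s) s) ∧ (∀ s ∈ I, HasDerivAt (deriv f) (deriv (deriv f) s) s) := by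
  have h2 : ContDiffOn ℝ ((1:ℕ∞) + 1) f I := by exact_mod_cast hf
  have hd := (contDiffOn_succ_iff_deriv_of_isOpen hI).mp h2
  constructor
  · intro s hs
    exact ((hd.1 s hs).differentiableAt (hI.mem_nhds hs)).hasDerivAt
  · intro s hs
    have : DifferentiableOn ℝ (deriv f) I := hd.2.2.differentiableOn (by norm_num)
    exact ((this s hs).differentiableAt (hI.mem_nhds hs)).hasDerivAt

set_option maxHeartbeats 2000000 in
/-- There are no minimal surfaces in Sol₃ foliated by arcs of circles
in the horizontal planes `z = const`. -/
theorem no_minimal_cyclic_surfaces_horizontal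
    (I J : Set ℝ) (hIo : IsOpen I) (hIne : I.Nonempty) (hIc : I.OrdConnected)
    (hJo : IsOpen J) (hJne : J.Nonempty) (hJc : J.OrdConnected)
    (a b r : ℝ → ℝ)
    (ha : ContDiffOn ℝ 2 a I) (hb : ContDiffOn ℝ 2 b I) (hr : ContDiffOn ℝ 2 r I)
    (hrpos : ∀ s ∈ I, 0 < r s) :
    ¬ MeanZero I J
      (fun s t => (a s + r s * exp (-s) * cos t, b s + r s * exp s * sin t, s)) := by
  intro h
  obtain ⟨s₀, hs₀⟩ := hIne
  obtain ⟨t₀, ht₀⟩ := hJne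
  obtain ⟨haD, haD2⟩ := derivFacts hIo ha
  obtain ⟨hbD, hbD2⟩ := derivFacts hIo hb
  obtain ⟨hrD, hrD2⟩ := derivFacts hIo hr
  set X : ℝ → ℝ → V3 :=
    (fun s t => (a s + r s * exp (-s) * cos t, b s + r s * exp s * sin t, s)) with hX
  have hpt : ∀ t : ℝ, X s₀ t
      = (a s₀ + r s₀ * exp (-s₀) * cos t, b s₀ + r s₀ * exp s₀ * sin t, s₀) := fun t => rfl
  have hxs : ∀ s ∈ I, ∀ t : ℝ, pXs X s t
      = (deriv a s + (deriv r s - r s) * exp (-s) * cos t,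
         deriv b s + (deriv r s + r s) * exp s * sin t, 1) := by
    intro s hs t
    have h1 : HasDerivAt (fun s' => a s' + r s' * exp (-s') * cos t)
        (deriv a s + (deriv r s - r s) * exp (-s) * cos t) s := by
      have := (haD s hs).add ((((hrD s hs).mul (((hasDerivAt_id s).neg).exp)).mul_const (cos t)))
      refine this.congr_deriv ?_
      simp only [id_eq, Pi.neg_apply]
      ring
    have h2 : HasDerivAt (fun s' => b s' + r s' * exp s' * sin t)
        (deriv b s + (deriv r s + r s) * exp s * sin t) s := by
      have := (hbD s hs).add ((((hrD s hs).mul ((hasDerivAt_id s).exp)).mul_const (sin t)))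
      refine this.congr_deriv ?_
      simp only [id_eq]
      ring
    have h3 : HasDerivAt (fun s' : ℝ => s') 1 s := hasDerivAt_id s
    exact ((h1.prodMk (h2.prodMk h3)).deriv)
  have hxt : ∀ s t : ℝ, pXt X s t
      = (-(r s * exp (-s)) * sin t, r s * exp s * cos t, 0) := by
    intro s t
    have h1 : HasDerivAt (fun t' => a s + r s * exp (-s) * cos t') (-(r s * exp (-s)) * sin t) t := by
      have := ((Real.hasDerivAt_cos t).const_mul (r s * exp (-s))).const_add (a s)
      refine this.congr_deriv ?_
      ring
    have h2 : HasDerivAt (fun t' => b s + r s * exp s * sin t') (r s * exp s * cos t) t := by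
      have := ((Real.hasDerivAt_sin t).const_mul (r s * exp s)).const_add (b s)
      convert this using 1
    have h3 : HasDerivAt (fun _ : ℝ => s) 0 t := hasDerivAt_const t s
    exact ((h1.prodMk (h2.prodMk h3)).deriv)
  have hdss : ∀ t : ℝ, deriv (fun s' => pXs X s' t) s₀ =
      (deriv (deriv a) s₀ + (deriv (deriv r) s₀ - 2 * deriv r s₀ + r s₀) * exp (-s₀) * cos t,
       deriv (deriv b) s₀ + (deriv (deriv r) s₀ + 2 * deriv r s₀ + r s₀) * exp s₀ * sin t, 0) := by
    intro t
    have hev : (fun s' => pXs X s' t) =ᶠ[nhds s₀] (fun s' =>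
        ((deriv a s' + (deriv r s' - r s') * exp (-s') * cos t : ℝ),
         (deriv b s' + (deriv r s' + r s') * exp s' * sin t : ℝ), (1:ℝ))) := by
      filter_upwards [hIo.mem_nhds hs₀] with s hs using hxs s hs t
    rw [hev.deriv_eq]
    have h1 : HasDerivAt (fun s' => deriv a s' + (deriv r s' - r s') * exp (-s') * cos t)
        (deriv (deriv a) s₀ + (deriv (deriv r) s₀ - 2 * deriv r s₀ + r s₀) * exp (-s₀) * cos t) s₀ := by
      have := (haD2 s₀ hs₀).add ((((hrD2 s₀ hs₀).sub (hrD s₀ hs₀)).mul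
        (((hasDerivAt_id s₀).neg).exp)).mul_const (cos t))
      refine this.congr_deriv ?_
      simp only [id_eq, Pi.neg_apply, Pi.sub_apply]
      ring
    have h2 : HasDerivAt (fun s' => deriv b s' + (deriv r s' + r s') * exp s' * sin t)
        (deriv (deriv b) s₀ + (deriv (deriv r) s₀ + 2 * deriv r s₀ + r s₀) * exp s₀ * sin t) s₀ := by
      have := (hbD2 s₀ hs₀).add ((((hrD2 s₀ hs₀).add (hrD s₀ hs₀)).mul
        ((hasDerivAt_id s₀).exp)).mul_const (sin t))
      refine this.congr_deriv ?_
      simp only [id_eq, Pi.add_apply]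
      ring
    have h3 : HasDerivAt (fun _ : ℝ => (1:ℝ)) 0 s₀ := hasDerivAt_const s₀ 1
    exact ((h1.prodMk (h2.prodMk h3)).deriv)
  have hdst : ∀ t : ℝ, deriv (fun t' => pXs X s₀ t') t =
      (-((deriv r s₀ - r s₀) * exp (-s₀)) * sin t, (deriv r s₀ + r s₀) * exp s₀ * cos t, 0) := by
    intro t
    have hfe : (fun t' => pXs X s₀ t') = (fun t' =>
        ((deriv a s₀ + (deriv r s₀ - r s₀) * exp (-s₀) * cos t' : ℝ),
         (deriv b s₀ + (deriv r s₀ + r s₀) * exp s₀ * sin t' : ℝ), (1:ℝ))) :=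
      funext fun t' => hxs s₀ hs₀ t'
    rw [hfe]
    have h1 : HasDerivAt (fun t' => deriv a s₀ + (deriv r s₀ - r s₀) * exp (-s₀) * cos t')
        (-((deriv r s₀ - r s₀) * exp (-s₀)) * sin t) t := by
      have := ((Real.hasDerivAt_cos t).const_mul ((deriv r s₀ - r s₀) * exp (-s₀))).const_add (deriv a s₀)
      refine this.congr_deriv ?_
      ring
    have h2 : HasDerivAt (fun t' => deriv b s₀ + (deriv r s₀ + r s₀) * exp s₀ * sin t')
        ((deriv r s₀ + r s₀) * exp s₀ * cos t) t := by
      have := ((Real.hasDerivAt_sin t).const_mul ((deriv r s₀ + r s₀) * exp s₀)).const_add (deriv b s₀)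
      convert this using 1
    have h3 : HasDerivAt (fun _ : ℝ => (1:ℝ)) 0 t := hasDerivAt_const t 1
    exact ((h1.prodMk (h2.prodMk h3)).deriv)
  have hdtt : ∀ t : ℝ, deriv (fun t' => pXt X s₀ t') t =
      (-(r s₀ * exp (-s₀)) * cos t, -(r s₀ * exp s₀) * sin t, 0) := by
    intro t
    have hfe : (fun t' => pXt X s₀ t') = (fun t' =>
        ((-(r s₀ * exp (-s₀)) * sin t' : ℝ), (r s₀ * exp s₀ * cos t' : ℝ), (0:ℝ))) :=
      funext fun t' => hxt s₀ t'
    rw [hfe]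
    have h1 : HasDerivAt (fun t' => -(r s₀ * exp (-s₀)) * sin t') (-(r s₀ * exp (-s₀)) * cos t) t := by
      have := (Real.hasDerivAt_sin t).const_mul (-(r s₀ * exp (-s₀)))
      convert this using 1
    have h2 : HasDerivAt (fun t' => r s₀ * exp s₀ * cos t') (-(r s₀ * exp s₀) * sin t) t := by
      have := (Real.hasDerivAt_cos t).const_mul (r s₀ * exp s₀)
      refine this.congr_deriv ?_
      ring
    have h3 : HasDerivAt (fun _ : ℝ => (0:ℝ)) 0 t := hasDerivAt_const t 0
    exact ((h1.prodMk (h2.prodMk h3)).deriv)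
  have he2 : Real.exp (2 * s₀) = Real.exp s₀ * Real.exp s₀ := by
    rw [two_mul, Real.exp_add]
  have he2' : Real.exp (-(2 * s₀)) = Real.exp (-s₀) * Real.exp (-s₀) := by
    rw [show -(2 * s₀) = -s₀ + -s₀ by ring, Real.exp_add]
  have hEEI : Real.exp s₀ * Real.exp (-s₀) = 1 := by
    rw [← Real.exp_add]; simp
  have key : ∀ t ∈ J, (-(r s₀) - (r s₀)*(deriv r s₀)^2 + (r s₀)^2*(deriv (deriv r) s₀) + (r s₀)^2*(deriv r s₀) - (r s₀)^3 - (deriv b s₀)^2*(r s₀)*(Real.exp (-s₀))^2 - (deriv a s₀)^2*(r s₀)*(Real.exp s₀)^2) + (-(2*(r s₀)^2*(deriv r s₀)) - 4*(r s₀)^3) * Real.sin t ^ 2 + (4*(r s₀)^3) * Real.sin t ^ 4 + Real.sin t * ((((deriv (deriv b) s₀)*(r s₀)^2 - 2*(deriv b s₀)*(r s₀)*(deriv r s₀) - 5*(deriv b s₀)*(r s₀)^2)*(Real.exp (-s₀))) + (2*(deriv b s₀)*(r s₀)^2*(Real.exp (-s₀))) * Real.sin t ^ 2) + Real.cos t *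 ((((deriv (deriv a) s₀)*(r s₀)^2 - 2*(deriv a s₀)*(r s₀)*(deriv r s₀) + 3*(deriv a s₀)*(r s₀)^2)*(Real.exp s₀)) + (2*(deriv a s₀)*(r s₀)^2*(Real.exp s₀)) * Real.sin t ^ 2) = 0 := by
    intro t ht
    have hpy : Real.cos t ^ 2 + Real.sin t ^ 2 = 1 := Real.cos_sq_add_sin_sq t
    have hn1 : gSol (X s₀ t) ((Real.exp (-s₀)) * Real.cos t, (Real.exp s₀) * Real.sin t, -((Real.exp s₀) * Real.cos t * (deriv a s₀ + (deriv r s₀ - r s₀) * (Real.exp (-s₀)) * Real.cos t) + (Real.exp (-s₀)) * Real.sin t * (deriv b s₀ + (deriv r s₀ + r s₀) * (Real.exp s₀) * Real.sin t))) (pXs X s₀ t) = 0 := by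
      rw [hxs s₀ hs₀ t, hpt t]
      simp only [gSol]
      rw [he2, he2']
      linear_combination ((Real.exp s₀) * Real.cos t * (deriv a s₀ + (deriv r s₀ - r s₀) * (Real.exp (-s₀)) * Real.cos t)
        + (Real.exp (-s₀)) * Real.sin t * (deriv b s₀ + (deriv r s₀ + r s₀) * (Real.exp s₀) * Real.sin t)) * hEEI
    have hn2 : gSol (X s₀ t) ((Real.exp (-s₀)) * Real.cos t, (Real.exp s₀) * Real.sin t, -((Real.exp s₀) * Real.cos t * (deriv a s₀ + (deriv r s₀ - r s₀) * (Real.exp (-s₀)) * Real.cos t) + (Real.exp (-s₀)) * Real.sin t * (deriv b s₀ + (deriv r s₀ + r s₀) * (Real.exp s₀) * Real.sin t))) (pXt X s₀ t) = 0 := by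
      rw [hxt s₀ t, hpt t]
      simp only [gSol]
      rw [he2, he2']
      ring
    have H := h s₀ hs₀ t ht ((Real.exp (-s₀)) * Real.cos t, (Real.exp s₀) * Real.sin t, -((Real.exp s₀) * Real.cos t * (deriv a s₀ + (deriv r s₀ - r s₀) * (Real.exp (-s₀)) * Real.cos t) + (Real.exp (-s₀)) * Real.sin t * (deriv b s₀ + (deriv r s₀ + r s₀) * (Real.exp s₀) * Real.sin t))) hn1 hn2
    simp only [Sss, Sst, Stt] at H
    rw [hdss t, hdst t, hdtt t, hxs s₀ hs₀ t, hxt s₀ t, hpt t] at H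
    simp only [gSol, GammaSol, Prod.fst_add, Prod.snd_add] at H
    rw [he2, he2'] at H
    linear_combination H + ((0:ℝ) + (1:ℝ)*(r s₀)*(Real.exp s₀)^2*(Real.exp (-s₀))^2 + (1:ℝ)*(r s₀)*(deriv r s₀)^2*(Real.exp s₀)^4*(Real.exp (-s₀))^4 + (1:ℝ)*(r s₀)*(deriv r s₀)^2*(Real.sin t)^2*(Real.exp s₀)^4*(Real.exp (-s₀))^4 + (1:ℝ)*(r s₀)*(deriv r s₀)^2*(Real.cos t)^2*(Real.exp s₀)^4*(Real.exp (-s₀))^4 + (-1:ℝ)*(r s₀)^2*(deriv (deriv r) s₀)*(Real.exp s₀)^4*(Real.exp (-s₀))^4 + (-1:ℝ)*(r s₀)^2*(deriv (deriv r) s₀)*(Real.sin t)^2*(Real.exp s₀)^4*(Real.exp (-s₀))^4 + (-1:ℝ)*(r s₀)^2*(deriv (deriv r) s₀)*(Real.cos t)^2*(Real.exp s₀)^4*(Real.exp (-s₀))^4 + (1:ℝ)*(r s₀)^2*(deriv r s₀)*(Real.exp s₀)^3*(Real.exp (-s₀))^3 + (-2:ℝ)*(r s₀)^2*(deriv r s₀)*(Real.exp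 s₀)^4*(Real.exp (-s₀))^4 + (-1:ℝ)*(r s₀)^2*(deriv r s₀)*(Real.sin t)^2*(Real.exp s₀)^3*(Real.exp (-s₀))^3 + (2:ℝ)*(r s₀)^2*(deriv r s₀)*(Real.sin t)^2*(Real.exp s₀)^4*(Real.exp (-s₀))^4 + (1:ℝ)*(r s₀)^2*(deriv r s₀)*(Real.cos t)^2*(Real.exp s₀)^3*(Real.exp (-s₀))^3 + (-2:ℝ)*(r s₀)^2*(deriv r s₀)*(Real.cos t)^2*(Real.exp s₀)^4*(Real.exp (-s₀))^4 + (-1:ℝ)*(r s₀)^3*(Real.exp s₀)^3*(Real.exp (-s₀))^3 + (2:ℝ)*(r s₀)^3*(Real.exp s₀)^4*(Real.exp (-s₀))^4 + (3:ℝ)*(r s₀)^3*(Real.sin t)^2*(Real.exp s₀)^3*(Real.exp (-s₀))^3 + (2:ℝ)*(r s₀)^3*(Real.sin t)^2*(Real.exp s₀)^4*(Real.exp (-s₀))^4 + (-1:ℝ)*(r s₀)^3*(Real.cos t)^2*(Real.exp s₀)^3*(Real.exp (-s₀))^3 + (2:ℝ)*(r s₀)^3*(Real.cos t)^2*(Real.exp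 s₀)^4*(Real.exp (-s₀))^4 + (-1:ℝ)*(deriv (deriv b) s₀)*(r s₀)^2*(Real.sin t)*(Real.exp s₀)^3*(Real.exp (-s₀))^4 + (2:ℝ)*(deriv b s₀)*(r s₀)*(deriv r s₀)*(Real.sin t)*(Real.exp s₀)^3*(Real.exp (-s₀))^4 + (1:ℝ)*(deriv b s₀)*(r s₀)^2*(Real.sin t)*(Real.exp s₀)^2*(Real.exp (-s₀))^3 + (4:ℝ)*(deriv b s₀)*(r s₀)^2*(Real.sin t)*(Real.exp s₀)^3*(Real.exp (-s₀))^4 + (1:ℝ)*(deriv b s₀)^2*(r s₀)*(Real.exp s₀)^2*(Real.exp (-s₀))^4 + (-1:ℝ)*(deriv (deriv a) s₀)*(r s₀)^2*(Real.cos t)*(Real.exp s₀)^4*(Real.exp (-s₀))^3 + (2:ℝ)*(deriv a s₀)*(r s₀)*(deriv r s₀)*(Real.cos t)*(Real.exp s₀)^4*(Real.exp (-s₀))^3 + (1:ℝ)*(deriv a s₀)*(r s₀)^2*(Real.cos t)*(Real.exp s₀)^3*(Real.exp (-s₀))^2 + (-4:ℝ)*(deriv a s₀)*(r s₀)^2*(Real.cos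 t)*(Real.exp s₀)^4*(Real.exp (-s₀))^3 + (1:ℝ)*(deriv a s₀)^2*(r s₀)*(Real.exp s₀)^4*(Real.exp (-s₀))^2) * hpy + ((0:ℝ) + (1:ℝ)*(r s₀) + (1:ℝ)*(r s₀)*(Real.exp s₀)*(Real.exp (-s₀)) + (1:ℝ)*(r s₀)*(deriv r s₀)^2 + (1:ℝ)*(r s₀)*(deriv r s₀)^2*(Real.exp s₀)*(Real.exp (-s₀)) + (1:ℝ)*(r s₀)*(deriv r s₀)^2*(Real.exp s₀)^2*(Real.exp (-s₀))^2 + (1:ℝ)*(r s₀)*(deriv r s₀)^2*(Real.exp s₀)^3*(Real.exp (-s₀))^3 + (-1:ℝ)*(r s₀)^2*(deriv (deriv r) s₀) + (-1:ℝ)*(r s₀)^2*(deriv (deriv r) s₀)*(Real.exp s₀)*(Real.exp (-s₀)) + (-1:ℝ)*(r s₀)^2*(deriv (deriv r) s₀)*(Real.exp s₀)^2*(Real.exp (-s₀))^2 + (-1:ℝ)*(r s₀)^2*(deriv (deriv r) s₀)*(Real.exp s₀)^3*(Real.exp (-s₀))^3 + (-1:ℝ)*(r s₀)^2*(deriv r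 s₀) + (-1:ℝ)*(r s₀)^2*(deriv r s₀)*(Real.exp s₀)*(Real.exp (-s₀)) + (-1:ℝ)*(r s₀)^2*(deriv r s₀)*(Real.exp s₀)^2*(Real.exp (-s₀))^2 + (-2:ℝ)*(r s₀)^2*(deriv r s₀)*(Real.exp s₀)^3*(Real.exp (-s₀))^3 + (2:ℝ)*(r s₀)^2*(deriv r s₀)*(Real.sin t)^2 + (2:ℝ)*(r s₀)^2*(deriv r s₀)*(Real.sin t)^2*(Real.exp s₀)*(Real.exp (-s₀)) + (2:ℝ)*(r s₀)^2*(deriv r s₀)*(Real.sin t)^2*(Real.exp s₀)^2*(Real.exp (-s₀))^2 + (4:ℝ)*(r s₀)^2*(deriv r s₀)*(Real.sin t)^2*(Real.exp s₀)^3*(Real.exp (-s₀))^3 + (1:ℝ)*(r s₀)^3 + (1:ℝ)*(r s₀)^3*(Real.exp s₀)*(Real.exp (-s₀)) + (1:ℝ)*(r s₀)^3*(Real.exp s₀)^2*(Real.exp (-s₀))^2 + (2:ℝ)*(r s₀)^3*(Real.exp s₀)^3*(Real.exp (-s₀))^3 + (4:ℝ)*(r s₀)^3*(Real.sin t)^2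 + (4:ℝ)*(r s₀)^3*(Real.sin t)^2*(Real.exp s₀)*(Real.exp (-s₀)) + (4:ℝ)*(r s₀)^3*(Real.sin t)^2*(Real.exp s₀)^2*(Real.exp (-s₀))^2 + (-4:ℝ)*(r s₀)^3*(Real.sin t)^4 + (-4:ℝ)*(r s₀)^3*(Real.sin t)^4*(Real.exp s₀)*(Real.exp (-s₀)) + (-4:ℝ)*(r s₀)^3*(Real.sin t)^4*(Real.exp s₀)^2*(Real.exp (-s₀))^2 + (-1:ℝ)*(deriv (deriv b) s₀)*(r s₀)^2*(Real.sin t)*(Real.exp (-s₀)) + (-1:ℝ)*(deriv (deriv b) s₀)*(r s₀)^2*(Real.sin t)*(Real.exp s₀)*(Real.exp (-s₀))^2 + (-1:ℝ)*(deriv (deriv b) s₀)*(r s₀)^2*(Real.sin t)*(Real.exp s₀)^2*(Real.exp (-s₀))^3 + (2:ℝ)*(deriv b s₀)*(r s₀)*(deriv r s₀)*(Real.sin t)*(Real.exp (-s₀)) + (2:ℝ)*(deriv b s₀)*(r s₀)*(deriv r s₀)*(Real.sin t)*(Real.exp s₀)*(Real.exp (-s₀))^2 + (2:ℝ)*(deriv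 b s₀)*(r s₀)*(deriv r s₀)*(Real.sin t)*(Real.exp s₀)^2*(Real.exp (-s₀))^3 + (5:ℝ)*(deriv b s₀)*(r s₀)^2*(Real.sin t)*(Real.exp (-s₀)) + (5:ℝ)*(deriv b s₀)*(r s₀)^2*(Real.sin t)*(Real.exp s₀)*(Real.exp (-s₀))^2 + (4:ℝ)*(deriv b s₀)*(r s₀)^2*(Real.sin t)*(Real.exp s₀)^2*(Real.exp (-s₀))^3 + (-2:ℝ)*(deriv b s₀)*(r s₀)^2*(Real.sin t)^3*(Real.exp (-s₀)) + (-2:ℝ)*(deriv b s₀)*(r s₀)^2*(Real.sin t)^3*(Real.exp s₀)*(Real.exp (-s₀))^2 + (1:ℝ)*(deriv b s₀)^2*(r s₀)*(Real.exp (-s₀))^2 + (1:ℝ)*(deriv b s₀)^2*(r s₀)*(Real.exp s₀)*(Real.exp (-s₀))^3 + (-1:ℝ)*(deriv (deriv a) s₀)*(r s₀)^2*(Real.cos t)*(Real.exp s₀) + (-1:ℝ)*(deriv (deriv a) s₀)*(r s₀)^2*(Real.cos t)*(Real.exp s₀)^2*(Real.exp (-s₀)) + (-1:ℝ)*(deriv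 (deriv a) s₀)*(r s₀)^2*(Real.cos t)*(Real.exp s₀)^3*(Real.exp (-s₀))^2 + (2:ℝ)*(deriv a s₀)*(r s₀)*(deriv r s₀)*(Real.cos t)*(Real.exp s₀) + (2:ℝ)*(deriv a s₀)*(r s₀)*(deriv r s₀)*(Real.cos t)*(Real.exp s₀)^2*(Real.exp (-s₀)) + (2:ℝ)*(deriv a s₀)*(r s₀)*(deriv r s₀)*(Real.cos t)*(Real.exp s₀)^3*(Real.exp (-s₀))^2 + (-3:ℝ)*(deriv a s₀)*(r s₀)^2*(Real.cos t)*(Real.exp s₀) + (-3:ℝ)*(deriv a s₀)*(r s₀)^2*(Real.cos t)*(Real.exp s₀)^2*(Real.exp (-s₀)) + (-4:ℝ)*(deriv a s₀)*(r s₀)^2*(Real.cos t)*(Real.exp s₀)^3*(Real.exp (-s₀))^2 + (-2:ℝ)*(deriv a s₀)*(r s₀)^2*(Real.cos t)*(Real.sin t)^2*(Real.exp s₀) + (-2:ℝ)*(deriv a s₀)*(r s₀)^2*(Real.cos t)*(Real.sin t)^2*(Real.exp s₀)^2*(Real.exp (-s₀)) + (1:ℝ)*(deriv a s₀)^2*(r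 s₀)*(Real.exp s₀)^2 + (1:ℝ)*(deriv a s₀)^2*(r s₀)*(Real.exp s₀)^3*(Real.exp (-s₀))) * hEEI
  have hana : AnalyticOnNhd ℝ (fun t => (-(r s₀) - (r s₀)*(deriv r s₀)^2 + (r s₀)^2*(deriv (deriv r) s₀) + (r s₀)^2*(deriv r s₀) - (r s₀)^3 - (deriv b s₀)^2*(r s₀)*(Real.exp (-s₀))^2 - (deriv a s₀)^2*(r s₀)*(Real.exp s₀)^2) + (-(2*(r s₀)^2*(deriv r s₀)) - 4*(r s₀)^3) * Real.sin t ^ 2 + (4*(r s₀)^3) * Real.sin t ^ 4 + Real.sin t * ((((deriv (deriv b) s₀)*(r s₀)^2 - 2*(deriv b s₀)*(r s₀)*(deriv r s₀) - 5*(deriv b s₀)*(r s₀)^2)*(Real.exp (-s₀))) + (2*(deriv b s₀)*(r s₀)^2*(Real.exp (-s₀))) * Real.sin t ^ 2) + Real.cos t * ((((deriv (deriv a) s₀)*(r s₀)^2 - 2*(deriv a s₀)*(r s₀)*(deriv r s₀) + 3*(deriv a s₀)*(r s₀)^2)*(Real.exp s₀)) + (2*(deriv a s₀)*(r s₀)^2*(Real.exp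 s₀)) * Real.sin t ^ 2)) Set.univ := by
    intro x _
    have hsa := analyticAt_rsin x
    have hca := analyticAt_rcos x
    exact ((((analyticAt_const.add (analyticAt_const.mul (hsa.pow 2))).add
        (analyticAt_const.mul (hsa.pow 4))).add
        (hsa.mul (analyticAt_const.add (analyticAt_const.mul (hsa.pow 2))))).add
        (hca.mul (analyticAt_const.add (analyticAt_const.mul (hsa.pow 2)))))
  have hev0 : (fun t => (-(r s₀) - (r s₀)*(deriv r s₀)^2 + (r s₀)^2*(deriv (deriv r) s₀) + (r s₀)^2*(deriv r s₀) - (r s₀)^3 - (deriv b s₀)^2*(r s₀)*(Real.exp (-s₀))^2 - (deriv a s₀)^2*(r s₀)*(Real.exp s₀)^2) + (-(2*(r s₀)^2*(deriv r s₀)) - 4*(r s₀)^3) * Real.sin t ^ 2 + (4*(r s₀)^3) * Real.sin t ^ 4 + Real.sin t * ((((deriv (deriv b) s₀)*(r s₀)^2 - 2*(deriv b s₀)*(r s₀)*(deriv r s₀) - 5*(deriv b s₀)*(r s₀)^2)*(Real.exp (-s₀))) + (2*(deriv b s₀)*(r s₀)^2*(Real.exp (-s₀))) * Real.sin t ^ 2)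 + Real.cos t * ((((deriv (deriv a) s₀)*(r s₀)^2 - 2*(deriv a s₀)*(r s₀)*(deriv r s₀) + 3*(deriv a s₀)*(r s₀)^2)*(Real.exp s₀)) + (2*(deriv a s₀)*(r s₀)^2*(Real.exp s₀)) * Real.sin t ^ 2)) =ᶠ[nhds t₀] 0 := by
    filter_upwards [hJo.mem_nhds ht₀] with t ht using key t ht
  have hzero := hana.eqOn_zero_of_preconnected_of_eventuallyEq_zero
    isPreconnected_univ (Set.mem_univ t₀) hev0
  have hall : ∀ t : ℝ, (-(r s₀) - (r s₀)*(deriv r s₀)^2 + (r s₀)^2*(deriv (deriv r) s₀) + (r s₀)^2*(deriv r s₀) - (r s₀)^3 - (deriv b s₀)^2*(r s₀)*(Real.exp (-s₀))^2 - (deriv a s₀)^2*(r s₀)*(Real.exp s₀)^2) + (-(2*(r s₀)^2*(deriv r s₀)) - 4*(r s₀)^3) * Real.sin t ^ 2 + (4*(r s₀)^3) * Real.sin t ^ 4 + Real.sin t * ((((deriv (deriv b) s₀)*(r s₀)^2 - 2*(deriv b s₀)*(r s₀)*(deriv r s₀) - 5*(deriv b s₀)*(r s₀)^2)*(Real.exp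 (-s₀))) + (2*(deriv b s₀)*(r s₀)^2*(Real.exp (-s₀))) * Real.sin t ^ 2) + Real.cos t * ((((deriv (deriv a) s₀)*(r s₀)^2 - 2*(deriv a s₀)*(r s₀)*(deriv r s₀) + 3*(deriv a s₀)*(r s₀)^2)*(Real.exp s₀)) + (2*(deriv a s₀)*(r s₀)^2*(Real.exp s₀)) * Real.sin t ^ 2) = 0 := by
    intro t
    simpa using hzero (Set.mem_univ t)
  have h1 := hall 0
  have h2 := hall π
  have h3 := hall (π / 2)
  have h4 := hall (-(π / 2))
  have h5 := hall (π / 4)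
  have h6 := hall (-(π / 4))
  have h7 := hall (π - π / 4)
  have h8 := hall (-(π - π / 4))
  simp only [Real.sin_zero, Real.cos_zero, Real.sin_pi, Real.cos_pi, Real.sin_pi_div_two,
    Real.cos_pi_div_two, Real.sin_neg, Real.cos_neg, Real.sin_pi_sub, Real.cos_pi_sub,
    Real.sin_pi_div_four, Real.cos_pi_div_four] at h1 h2 h3 h4 h5 h6 h7 h8
  have hq : Real.sqrt 2 ^ 2 = 2 := Real.sq_sqrt (by norm_num)
  have hD : (4:ℝ) * (r s₀) ^ 3 = 0 := by
    linear_combination h1 + h2 + h3 + h4 - h5 - h6 - h7 - h8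
      + ((-(2*(r s₀)^2*(deriv r s₀)) - 4*(r s₀)^3) + (4*(r s₀)^3) * (Real.sqrt 2 ^ 2 + 2) / 4) * hq
  linarith [hD, pow_pos (hrpos s₀ hs₀) 3]
end
end

section
/- Let I ⊆ ℝ be a nonempty open interval and let a : I → ℝ be twice differentiable. Then a satisfies the differential equation a''(s) − 2·a'(s)² − e^{2·a(s)} = 0 on I if and only if there exist λ, μ ∈ ℝ such that e^{−2·a(s)} = −s² + λ·s + μ for all s ∈ I, i.e. a(s) = −(1/2)·log(−s² + λ·s + μ) on I (where necessarily −s² + λ·s + μ > 0 on I). Equivalently, a solves the equation if and only if the function w(s) = e^{−2·a(s)} satisfies w''(s) = −2 on I. -/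
open Real

private lemma const_of_hasDerivAt_zero_s14 {s : Set ℝ} (hs : Convex ℝ s) {F : ℝ → ℝ}
    (hF : ∀ x ∈ s, HasDerivAt F 0 x) {x y : ℝ} (hx : x ∈ s) (hy : y ∈ s) : F x = F y := by
  have := hs.norm_image_sub_le_of_norm_hasDerivWithin_le
    (f' := fun _ => (0:ℝ)) (C := 0) (fun z hz => (hF z hz).hasDerivWithinAt)
    (fun z hz => by simp) hx hy
  simp only [zero_mul, norm_le_zero_iff, sub_eq_zero] at this
  exact this.symm

/-- A twice differentiable function `a` on a nonempty open interval `I`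
satisfies `a'' - 2·a'² - e^{2a} = 0` on `I` iff `e^{-2a(s)} = -s² + λs + μ` on `I`,
equivalently iff `w = e^{-2a}` satisfies `w'' = -2` on `I`. -/
theorem ode_flat_horocycle
    (I : Set ℝ) (hIo : IsOpen I) (hIne : I.Nonempty) (hIc : I.OrdConnected)
    (a : ℝ → ℝ)
    (ha1 : ∀ s ∈ I, DifferentiableAt ℝ a s)
    (ha2 : ∀ s ∈ I, DifferentiableAt ℝ (deriv a) s) :
    ((∀ s ∈ I, deriv (deriv a) s - 2 * (deriv a s) ^ 2 - exp (2 * a s) = 0) ↔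
      ∃ lam mu : ℝ, ∀ s ∈ I, exp (-(2 * a s)) = -s ^ 2 + lam * s + mu) ∧
    ((∀ s ∈ I, deriv (deriv a) s - 2 * (deriv a s) ^ 2 - exp (2 * a s) = 0) ↔
      ∀ s ∈ I, deriv (deriv (fun x => exp (-(2 * a x)))) s = -2) := by
  set w : ℝ → ℝ := fun x => exp (-(2 * a x)) with hw
  have hconv : Convex ℝ I := hIc.convex
  -- first derivative of w on I
  have hw1 : ∀ x ∈ I, HasDerivAt w (exp (-(2 * a x)) * (-(2 * deriv a x))) x := by
    intro x hx
    have h1 : HasDerivAt (fun y => -(2 * a y)) (-(2 * deriv a x)) x :=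
      (((ha1 x hx).hasDerivAt.const_mul 2).neg)
    exact h1.exp
  have hderivw : ∀ x ∈ I, deriv w x = exp (-(2 * a x)) * (-(2 * deriv a x)) :=
    fun x hx => (hw1 x hx).deriv
  -- second derivative of w on I
  have hw2 : ∀ x ∈ I, HasDerivAt (deriv w)
      (exp (-(2 * a x)) * (-(2 * deriv a x)) * (-(2 * deriv a x))
        + exp (-(2 * a x)) * (-(2 * deriv (deriv a) x))) x := by
    intro x hx
    have h1 : HasDerivAt (fun y => exp (-(2 * a y)) * (-(2 * deriv a y)))
        (exp (-(2 * a x)) * (-(2 * deriv a x)) * (-(2 * deriv a x))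
          + exp (-(2 * a x)) * (-(2 * deriv (deriv a) x))) x := by
      exact (hw1 x hx).mul (((ha2 x hx).hasDerivAt.const_mul 2).neg)
    refine h1.congr_of_eventuallyEq ?_
    filter_upwards [hIo.mem_nhds hx] with y hy
    exact hderivw y hy
  have hderiv2w : ∀ x ∈ I, deriv (deriv w) x
      = exp (-(2 * a x)) * (4 * (deriv a x) ^ 2 - 2 * deriv (deriv a) x) := by
    intro x hx
    rw [(hw2 x hx).deriv]; ring
  -- pointwise equivalence ODE ↔ w'' = -2
  have hpt : ∀ x ∈ I,
      (deriv (deriv a) x - 2 * (deriv a x) ^ 2 - exp (2 * a x) = 0 ↔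
        deriv (deriv w) x = -2) := by
    intro x hx
    rw [hderiv2w x hx]
    have he : exp (-(2 * a x)) * exp (2 * a x) = 1 := by
      rw [← exp_add]; simp
    constructor
    · intro h; nlinarith [exp_pos (2 * a x), exp_pos (-(2 * a x))]
    · intro h; nlinarith [exp_pos (2 * a x), exp_pos (-(2 * a x))]
  have iff2 : (∀ s ∈ I, deriv (deriv a) s - 2 * (deriv a s) ^ 2 - exp (2 * a s) = 0) ↔
      ∀ s ∈ I, deriv (deriv w) s = -2 := by
    constructor
    · intro h s hs; exact (hpt s hs).mp (h s hs)
    · intro h s hs; exact (hpt s hs).mpr (h s hs)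
  -- equivalence w'' = -2 ↔ quadratic form
  have iff3 : (∀ s ∈ I, deriv (deriv w) s = -2) ↔
      ∃ lam mu : ℝ, ∀ s ∈ I, w s = -s ^ 2 + lam * s + mu := by
    constructor
    · intro h
      obtain ⟨s₀, hs₀⟩ := hIne
      set lam : ℝ := deriv w s₀ + 2 * s₀ with hlam
      -- F x = deriv w x + 2 x is constant on I
      have hF : ∀ x ∈ I, deriv w x = -2 * x + lam := by
        intro x hx
        have hc : ∀ z ∈ I, HasDerivAt (fun y => deriv w y + 2 * y) 0 z := by
          intro z hz
          have := (hw2 z hz).add ((hasDerivAt_id z).const_mul 2)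
          have hz2 : exp (-(2 * a z)) * (-(2 * deriv a z)) * (-(2 * deriv a z))
              + exp (-(2 * a z)) * (-(2 * deriv (deriv a) z)) + 2 * 1 = 0 := by
            have := h z hz
            rw [hderiv2w z hz] at this
            nlinarith [this]
          rwa [hz2] at this
        have := const_of_hasDerivAt_zero_s14 hconv hc hx hs₀
        linarith [this]
      set mu : ℝ := w s₀ + s₀ ^ 2 - lam * s₀ with hmu
      refine ⟨lam, mu, fun x hx => ?_⟩
      have hc : ∀ z ∈ I, HasDerivAt (fun y => w y + y ^ 2 - lam * y) 0 z := by
        intro z hz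
        have h1 := ((hw1 z hz).add ((hasDerivAt_pow 2 z))).sub ((hasDerivAt_id z).const_mul lam)
        have hder := hF z hz
        rw [hderivw z hz] at hder
        exact h1.congr_deriv (by norm_num; linarith [hder])
      have := const_of_hasDerivAt_zero_s14 hconv hc hx hs₀
      have : w x + x ^ 2 - lam * x = w s₀ + s₀ ^ 2 - lam * s₀ := this
      rw [← hmu] at this
      linarith [this]
    · rintro ⟨lam, mu, hq⟩ s hs
      -- w agrees with the quadratic near each point of I
      have hq1 : ∀ x ∈ I, deriv w x = -2 * x + lam := by
        intro x hx
        have hpder : HasDerivAt (fun y : ℝ => -y ^ 2 + lam * y + mu) (-2 * x + lam) x := by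
          have := (((hasDerivAt_pow 2 x).neg).add ((hasDerivAt_id x).const_mul lam)).add_const mu
          exact this.congr_deriv (by push_cast; ring)
        have : HasDerivAt w (-2 * x + lam) x := by
          refine hpder.congr_of_eventuallyEq ?_
          filter_upwards [hIo.mem_nhds hx] with y hy
          exact hq y hy
        exact this.deriv
      have hpder : HasDerivAt (fun y : ℝ => -2 * y + lam) (-2) s := by
        have := ((hasDerivAt_id s).const_mul (-2)).add_const lam
        exact this.congr_deriv (by norm_num)
      have : HasDerivAt (deriv w) (-2) s := by
        refine hpder.congr_of_eventuallyEq ?_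
        filter_upwards [hIo.mem_nhds hs] with y hy
        exact hq1 y hy
      exact this.deriv
  exact ⟨iff2.trans iff3, iff2⟩
end
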